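/- arXiv:2411.13257 — 11 statements merged into one kernel-verified Lean document; each statement's English description precedes it below -/
import Mathlib

section
/- Let K be a finite set, Ω = Ω_O × (K ∪ {∂}) with P the objective probability on Ω_O extended to the objective σ-field, X = |𝒳| where 𝒳 is a random subset of K with 0 ≤ P(𝒳 = ∅) < 1, and suppose the graph on K with edges {x,y} whenever P({x,y} ⊆ 𝒳) > 0 is connected. Then any probability P_A on (Ω, ℱ) satisfying (PN), (PI), and (PEI) is uniquely determined and satisfies P_A(F ∩ {S = x}) = (1/E[X]) · P(F ∩ {x ∈ 𝒳}) for all objective events F and all x ∈ K. -/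
open scoped Classical
open Finset

/-- Probability of a set under a weight function on a finite type. -/
noncomputable def pr {α : Type*} [Fintype α] (μ : α → ℝ) (A : Set α) : ℝ :=
  ∑ a : α, if a ∈ A then μ a else 0

/-- Conditional probability. -/
noncomputable def cpr {α : Type*} [Fintype α] (μ : α → ℝ) (A B : Set α) : ℝ :=
  pr μ (A ∩ B) / pr μ B

/-- Expectation. -/
noncomputable def ex {α : Type*} [Fintype α] (μ : α → ℝ) (f : α → ℝ) : ℝ :=
  ∑ a : α, μ a * f a

/-- A probability weight: nonnegative and summing to one. -/
def IsProb {α : Type*} [Fintype α] (μ : α → ℝ) : Prop :=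
  (∀ a, 0 ≤ μ a) ∧ ∑ a : α, μ a = 1

section aux
variable {α : Type*} [Fintype α] {μ : α → ℝ}

lemma pr_nonneg (h : ∀ a, 0 ≤ μ a) (A : Set α) : 0 ≤ pr μ A :=
  Finset.sum_nonneg fun a _ => by by_cases ha : a ∈ A <;> simp [ha, h a]

lemma pr_mono (h : ∀ a, 0 ≤ μ a) {A B : Set α} (hAB : A ⊆ B) : pr μ A ≤ pr μ B :=
  Finset.sum_le_sum fun a _ => by
    by_cases ha : a ∈ A
    · simp [ha, hAB ha]
    · by_cases hb : a ∈ B <;> simp [ha, hb, h a]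

lemma pr_congr {A B : Set α} (h : A = B) : pr μ A = pr μ B := by rw [h]

lemma pr_le_one (h : ∀ a, 0 ≤ μ a) (h1 : ∑ a : α, μ a = 1) (A : Set α) : pr μ A ≤ 1 := by
  have : pr μ A ≤ pr μ Set.univ := pr_mono h (Set.subset_univ A)
  simpa [pr, h1] using this

lemma pr_pos_of_mem {a : α} {A : Set α} (h : ∀ b, 0 ≤ μ b) (ha : a ∈ A) (hμ : 0 < μ a) :
    0 < pr μ A :=
  lt_of_lt_of_le (by simpa [ha] using hμ)
    (Finset.single_le_sum (f := fun b => if b ∈ A then μ b else 0)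
      (fun b _ => by by_cases hb : b ∈ A <;> simp [hb, h b]) (Finset.mem_univ a))

lemma exists_pos_of_pr_pos {A : Set α} (h : 0 < pr μ A) : ∃ a ∈ A, 0 < μ a := by
  by_contra hc
  push_neg at hc
  have : pr μ A ≤ 0 := Finset.sum_nonpos fun a _ => by
    by_cases ha : a ∈ A
    · simpa [ha] using hc a ha
    · simp [ha]
  linarith

end aux

/-- Theorem (uniqueness of the Thirder measure): any probability `PA` on the
extended space `Ω₀ × Option K` satisfying (PN), (PI) and (PEI) is given by
`PA(F ∩ {S = x}) = E[X]⁻¹ · P(F ∩ {x ∈ 𝒳})`, provided the graph on `K` with an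
edge `{x,y}` whenever `P({x,y} ⊆ 𝒳) > 0` is connected. -/
theorem stmt0 {Ω₀ K : Type*} [Fintype Ω₀] [Fintype K] [DecidableEq K]
    (P0 : Ω₀ → ℝ) (𝒳 : Ω₀ → Finset K)
    (hP0 : IsProb P0)
    (hne : pr P0 {o | 𝒳 o = ∅} < 1)
    (hconn : ∀ x y : K,
      Relation.ReflTransGen (fun a b : K => 0 < pr P0 {o | a ∈ 𝒳 o ∧ b ∈ 𝒳 o}) x y)
    (PA : Ω₀ × Option K → ℝ) (hPA : IsProb PA)
    -- (PN) part (a): objective null events are `PA`-null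
    (hPN1 : ∀ F : Set Ω₀, pr P0 F = 0 → pr PA {ω | ω.1 ∈ F} = 0)
    -- (PN) part (b): the observer is located at an occupied cell
    (hPN2 : pr PA {ω | ∃ x : K, ω.2 = some x ∧ x ∈ 𝒳 ω.1} = 1)
    -- (PI)
    (hPI : ∀ (x : K) (B : Finset K), B ≠ ∅ →
      0 < pr PA {ω | 𝒳 ω.1 = B} →
      cpr PA {ω | ω.2 = some x} {ω | 𝒳 ω.1 = B} = if x ∈ B then (B.card : ℝ)⁻¹ else 0)
    -- (PEI)
    (hPEI : ∀ (F : Set Ω₀) (x : K), 0 < pr PA {ω | ω.2 = some x} →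
      cpr PA {ω | ω.1 ∈ F} {ω | ω.2 = some x} = cpr P0 F {o | x ∈ 𝒳 o}) :
    ∀ (F : Set Ω₀) (x : K),
      pr PA ({ω | ω.1 ∈ F} ∩ {ω | ω.2 = some x})
        = (ex P0 (fun o => ((𝒳 o).card : ℝ)))⁻¹ * pr P0 (F ∩ {o | x ∈ 𝒳 o}) := by
  obtain ⟨hP00, hP01⟩ := hP0
  obtain ⟨hPA0, hPA1⟩ := hPA
  set px : K → ℝ := fun x => pr P0 {o | x ∈ 𝒳 o} with hpx
  set q : K → ℝ := fun x => pr PA {ω | ω.2 = some x} with hq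
  -- there is some x with positive marginal
  have hex0 : ∃ x : K, 0 < px x := by
    have hsum : pr P0 {o | 𝒳 o = ∅} + pr P0 {o | 𝒳 o ≠ ∅} = 1 := by
      rw [← hP01, pr, pr, ← Finset.sum_add_distrib]
      refine Finset.sum_congr rfl fun o _ => ?_
      by_cases ho : 𝒳 o = ∅ <;> simp [ho]
    have h2 : 0 < pr P0 {o | 𝒳 o ≠ ∅} := by linarith
    obtain ⟨o, ho, hpo⟩ := exists_pos_of_pr_pos h2
    obtain ⟨x, hx⟩ := Finset.nonempty_iff_ne_empty.mpr ho
    exact ⟨x, pr_pos_of_mem hP00 hx hpo⟩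
  -- all marginals are positive, by connectedness
  have hpxpos : ∀ x, 0 < px x := by
    obtain ⟨x0, hx0⟩ := hex0
    intro x
    rcases (hconn x x0).cases_head with h | ⟨z, hz, _⟩
    · rwa [h]
    · refine lt_of_lt_of_le hz (pr_mono hP00 ?_)
      intro o ho; exact ho.1
  -- consequence of (PEI)
  have hPEI' : ∀ (F : Set Ω₀) (x : K), 0 < q x →
      pr PA ({ω : Ω₀ × Option K | ω.1 ∈ F} ∩ {ω | ω.2 = some x})
        = q x * pr P0 (F ∩ {o | x ∈ 𝒳 o}) / px x := by
    intro F x hqx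
    have h := hPEI F x hqx
    rw [cpr, cpr] at h
    rw [div_eq_div_iff hqx.ne' (hpxpos x).ne'] at h
    rw [eq_div_iff (hpxpos x).ne']
    linear_combination h
  -- positive q is preserved along edges, with constant ratio
  have hedge : ∀ x y : K, 0 < pr P0 {o | x ∈ 𝒳 o ∧ y ∈ 𝒳 o} → 0 < q x →
      q x * px y = q y * px x ∧ 0 < q y := by
    intro x y hxy hqx
    obtain ⟨o, ho, hpo⟩ := exists_pos_of_pr_pos hxy
    have hxB : x ∈ 𝒳 o := ho.1
    have hyB : y ∈ 𝒳 o := ho.2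
    set B := 𝒳 o with hB
    have hBne : B ≠ ∅ := fun h => by simp [h] at hxB
    have hcard : (0:ℝ) < (B.card : ℝ) := by
      have := Finset.card_pos.mpr (Finset.nonempty_iff_ne_empty.mpr hBne)
      exact_mod_cast this
    have hpB : 0 < pr P0 {o' | 𝒳 o' = B} := pr_pos_of_mem hP00 rfl hpo
    have hFB : ∀ z : K, z ∈ B →
        ({o' | 𝒳 o' = B} ∩ {o' | z ∈ 𝒳 o'} : Set Ω₀) = {o' | 𝒳 o' = B} := by
      intro z hz
      ext o'
      simp only [Set.mem_inter_iff, Set.mem_setOf_eq, and_iff_left_iff_imp]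
      intro h; rw [h]; exact hz
    have hset : ∀ z : K,
        ({ω : Ω₀ × Option K | ω.1 ∈ {o' | 𝒳 o' = B}} ∩ {ω | ω.2 = some z})
          = ({ω | ω.2 = some z} ∩ {ω | 𝒳 ω.1 = B}) := by
      intro z; ext ω; simp [Set.mem_inter_iff, and_comm]
    -- from PEI: the joint prob of {𝒳 = B, S = x}
    have hx1 : pr PA ({ω : Ω₀ × Option K | ω.2 = some x} ∩ {ω | 𝒳 ω.1 = B})
        = q x * pr P0 {o' | 𝒳 o' = B} / px x := by
      rw [← pr_congr (hset x), hPEI' _ x hqx, pr_congr (hFB x hxB)]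
    have hjx : 0 < pr PA ({ω : Ω₀ × Option K | ω.2 = some x} ∩ {ω | 𝒳 ω.1 = B}) := by
      rw [hx1]
      exact div_pos (mul_pos hqx hpB) (hpxpos x)
    have hmB : 0 < pr PA {ω : Ω₀ × Option K | 𝒳 ω.1 = B} :=
      lt_of_lt_of_le hjx (pr_mono hPA0 fun ω hω => hω.2)
    -- from PI: the joint prob equals m B / |B| for both x and y
    have hPIx := hPI x B hBne hmB
    have hPIy := hPI y B hBne hmB
    rw [cpr, if_pos hxB, div_eq_iff hmB.ne'] at hPIx
    rw [cpr, if_pos hyB, div_eq_iff hmB.ne'] at hPIy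
    have hjy : 0 < pr PA ({ω : Ω₀ × Option K | ω.2 = some y} ∩ {ω | 𝒳 ω.1 = B}) := by
      rw [hPIy]; exact mul_pos (inv_pos.2 hcard) hmB
    have hqy : 0 < q y :=
      lt_of_lt_of_le hjy (pr_mono hPA0 fun ω hω => hω.1)
    have hy1 : pr PA ({ω : Ω₀ × Option K | ω.2 = some y} ∩ {ω | 𝒳 ω.1 = B})
        = q y * pr P0 {o' | 𝒳 o' = B} / px y := by
      rw [← pr_congr (hset y), hPEI' _ y hqy, pr_congr (hFB y hyB)]
    have heq : q x * pr P0 {o' | 𝒳 o' = B} / px x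
        = q y * pr P0 {o' | 𝒳 o' = B} / px y := by
      rw [← hx1, ← hy1, hPIx, hPIy]
    rw [div_eq_div_iff (hpxpos x).ne' (hpxpos y).ne'] at heq
    refine ⟨mul_right_cancel₀ hpB.ne' ?_, hqy⟩
    linear_combination heq
  have hsym : ∀ x y : K, pr P0 {o | x ∈ 𝒳 o ∧ y ∈ 𝒳 o} = pr P0 {o | y ∈ 𝒳 o ∧ x ∈ 𝒳 o} := by
    intro x y; apply pr_congr; ext o; simp [and_comm]
  have hedge2 : ∀ x y : K, 0 < pr P0 {o | x ∈ 𝒳 o ∧ y ∈ 𝒳 o} → q x / px x = q y / px y := by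
    intro x y h
    rw [div_eq_div_iff (hpxpos x).ne' (hpxpos y).ne']
    by_cases hqx : 0 < q x
    · exact (hedge x y h hqx).1
    · by_cases hqy : 0 < q y
      · have := (hedge y x (by rw [← hsym x y]; exact h) hqy).1; linarith
      · have hqx0 : q x = 0 := le_antisymm (not_lt.1 hqx) (pr_nonneg hPA0 _)
        have hqy0 : q y = 0 := le_antisymm (not_lt.1 hqy) (pr_nonneg hPA0 _)
        rw [hqx0, hqy0]; ring
  -- the ratio is globally constant
  have hr : ∀ x y : K, q x / px x = q y / px y := by
    intro x y
    have h := hconn x y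
    induction h with
    | refl => rfl
    | tail _ hbc ih => exact ih.trans (hedge2 _ _ hbc)
  -- the q's sum to 1
  have hsumq : ∑ x : K, q x = 1 := by
    have h1 : ∑ x : K, q x = pr PA {ω : Ω₀ × Option K | ω.2 ≠ none} := by
      simp only [hq, pr, Set.mem_setOf_eq]
      rw [Finset.sum_comm]
      refine Finset.sum_congr rfl fun ω _ => ?_
      by_cases hω : ω.2 = none
      · simp [hω]
      · obtain ⟨a, ha⟩ := Option.ne_none_iff_exists'.mp hω
        rw [if_pos hω, Finset.sum_eq_single a]
        · rw [if_pos ha]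
        · intro b _ hb
          rw [if_neg]
          rw [ha]
          exact fun h => hb (Option.some_injective _ h).symm
        · intro hb; exact absurd (Finset.mem_univ a) hb
    have h2 : (1:ℝ) ≤ pr PA {ω : Ω₀ × Option K | ω.2 ≠ none} := by
      rw [← hPN2]
      refine pr_mono hPA0 ?_
      rintro ω ⟨x, hx, _⟩
      simp [hx]
    have h3 : pr PA {ω : Ω₀ × Option K | ω.2 ≠ none} ≤ 1 := pr_le_one hPA0 hPA1 _
    rw [h1]; linarith
  -- the expectation equals the sum of marginals
  have hE : ex P0 (fun o => ((𝒳 o).card : ℝ)) = ∑ x : K, px x := by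
    simp only [hpx, pr, Set.mem_setOf_eq, ex]
    rw [Finset.sum_comm]
    refine Finset.sum_congr rfl fun o _ => ?_
    rw [Finset.sum_congr rfl (fun x _ => ?_), Finset.sum_ite_mem, Finset.univ_inter,
      Finset.sum_const, nsmul_eq_mul, mul_comm]
    · by_cases hx : x ∈ 𝒳 o <;> simp [hx]
  -- identify the constant
  obtain ⟨x0, hq0pos⟩ : ∃ x0 : K, 0 < q x0 := by
    by_contra hc
    push_neg at hc
    have : ∑ x : K, q x ≤ 0 := Finset.sum_nonpos fun x _ => hc x
    linarith
  set c : ℝ := q x0 / px x0 with hc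
  have hcpos : 0 < c := div_pos hq0pos (hpxpos x0)
  have hqc : ∀ x, q x = c * px x := by
    intro x
    have := (hr x x0)
    rw [div_eq_div_iff (hpxpos x).ne' (hpxpos x0).ne'] at this
    rw [hc, div_mul_eq_mul_div, eq_div_iff (hpxpos x0).ne']
    linarith [this]
  have hEpos : 0 < ex P0 (fun o => ((𝒳 o).card : ℝ)) := by
    rw [hE]
    refine lt_of_lt_of_le (hpxpos x0) ?_
    exact Finset.single_le_sum (fun x _ => (hpxpos x).le) (Finset.mem_univ x0)
  have hcE : c * ex P0 (fun o => ((𝒳 o).card : ℝ)) = 1 := by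
    rw [hE, Finset.mul_sum, ← hsumq]
    exact Finset.sum_congr rfl fun x _ => (hqc x).symm
  have hcval : c = (ex P0 (fun o => ((𝒳 o).card : ℝ)))⁻¹ := by
    field_simp
    linear_combination hcE
  -- conclude
  intro F x
  have hqxpos : 0 < q x := by rw [hqc x]; exact mul_pos hcpos (hpxpos x)
  rw [hPEI' F x hqxpos, hqc x, hcval, div_eq_iff (hpxpos x).ne']
  ring
end

section
/- With K, 𝒳, Ω as in the generalized Sleeping Beauty setup (K finite, P(𝒳 = ∅) < 1), the probability P_E defined on ℱ by P_E(F ∩ {S = x}) = (1/E[|𝒳|]) · P(F ∩ {x ∈ 𝒳}) for objective F and x ∈ K (and P_E(S = ∂) = 0) satisfies the principles (PN), (PI), and (PEI). -/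
open scoped Classical
open Finset

section aux
variable {Ω₀ K : Type*} [Fintype Ω₀] [Fintype K] [DecidableEq K]

lemma pr_PE_eq (P0 : Ω₀ → ℝ) (𝒳 : Ω₀ → Finset K)
    (PE : Ω₀ × Option K → ℝ)
    (hPE1 : ∀ (o : Ω₀) (x : K),
      PE (o, some x) = (ex P0 (fun o' => ((𝒳 o').card : ℝ)))⁻¹ * P0 o *
        (if x ∈ 𝒳 o then 1 else 0))
    (hPE2 : ∀ o : Ω₀, PE (o, none) = 0)
    (A : Set (Ω₀ × Option K)) :
    pr PE A = (ex P0 (fun o' => ((𝒳 o').card : ℝ)))⁻¹ *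
      ∑ o : Ω₀, ∑ x : K, if (o, some x) ∈ A ∧ x ∈ 𝒳 o then P0 o else 0 := by
  rw [pr, Fintype.sum_prod_type, Finset.mul_sum]
  refine Finset.sum_congr rfl fun o _ => ?_
  rw [Fintype.sum_option, Finset.mul_sum]
  have h0 : (if ((o, (none : Option K)) : Ω₀ × Option K) ∈ A then PE (o, none) else 0) = 0 := by
    rw [hPE2]; simp
  rw [h0, zero_add]
  refine Finset.sum_congr rfl fun x _ => ?_
  rw [hPE1]
  by_cases h1 : ((o, some x) : Ω₀ × Option K) ∈ A <;> by_cases h2 : x ∈ 𝒳 o <;>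
    simp [h1, h2]

lemma ex_pos' (P0 : Ω₀ → ℝ) (𝒳 : Ω₀ → Finset K)
    (hP0 : IsProb P0) (hne : pr P0 {o | 𝒳 o = ∅} < 1) :
    0 < ex P0 (fun o' => ((𝒳 o').card : ℝ)) := by
  have key : ∀ o, (if 𝒳 o = ∅ then 0 else P0 o) ≤ P0 o * ((𝒳 o).card : ℝ) := by
    intro o
    by_cases h : 𝒳 o = ∅
    · simp [h]
    · have hc : (1 : ℝ) ≤ ((𝒳 o).card : ℝ) := by
        exact_mod_cast Finset.card_pos.mpr (Finset.nonempty_iff_ne_empty.mpr h)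
      simp only [h, if_false]
      calc P0 o = P0 o * 1 := by ring
        _ ≤ P0 o * ((𝒳 o).card : ℝ) := mul_le_mul_of_nonneg_left hc (hP0.1 o)
  have hsum : ∑ o : Ω₀, (if 𝒳 o = ∅ then 0 else P0 o)
      = 1 - pr P0 {o | 𝒳 o = ∅} := by
    rw [pr, ← hP0.2, ← Finset.sum_sub_distrib]
    refine Finset.sum_congr rfl fun o _ => ?_
    by_cases h : 𝒳 o = ∅ <;> simp [h]
  have hpos : 0 < ∑ o : Ω₀, (if 𝒳 o = ∅ then 0 else P0 o) := by
    rw [hsum]; linarith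
  calc (0:ℝ) < _ := hpos
    _ ≤ ex P0 (fun o' => ((𝒳 o').card : ℝ)) := Finset.sum_le_sum fun o _ => key o

end aux

/-- Theorem: the Thirder measure `P_E`, defined by
`P_E(F ∩ {S = x}) = E[|𝒳|]⁻¹ · P(F ∩ {x ∈ 𝒳})` (and `P_E(S = ∂) = 0`),
satisfies the principles (PN), (PI) and (PEI). -/
theorem stmt1 {Ω₀ K : Type*} [Fintype Ω₀] [Fintype K] [DecidableEq K]
    (P0 : Ω₀ → ℝ) (𝒳 : Ω₀ → Finset K)
    (hP0 : IsProb P0)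
    (hne : pr P0 {o | 𝒳 o = ∅} < 1)
    (PE : Ω₀ × Option K → ℝ)
    (hPE1 : ∀ (o : Ω₀) (x : K),
      PE (o, some x) = (ex P0 (fun o' => ((𝒳 o').card : ℝ)))⁻¹ * P0 o *
        (if x ∈ 𝒳 o then 1 else 0))
    (hPE2 : ∀ o : Ω₀, PE (o, none) = 0) :
    -- (PN) (a)
    (∀ F : Set Ω₀, pr P0 F = 0 → pr PE {ω | ω.1 ∈ F} = 0) ∧
    -- (PN) (b)
    pr PE {ω | ∃ x : K, ω.2 = some x ∧ x ∈ 𝒳 ω.1} = 1 ∧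
    -- (PI)
    (∀ (x : K) (B : Finset K), B ≠ ∅ →
      0 < pr PE {ω | 𝒳 ω.1 = B} →
      cpr PE {ω | ω.2 = some x} {ω | 𝒳 ω.1 = B} = if x ∈ B then (B.card : ℝ)⁻¹ else 0) ∧
    -- (PEI)
    (∀ (F : Set Ω₀) (x : K), 0 < pr PE {ω | ω.2 = some x} →
      cpr PE {ω | ω.1 ∈ F} {ω | ω.2 = some x} = cpr P0 F {o | x ∈ 𝒳 o}) := by
  have hEpos : 0 < ex P0 (fun o' => ((𝒳 o').card : ℝ)) := ex_pos' P0 𝒳 hP0 hne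
  have hEinv : 0 < (ex P0 (fun o' => ((𝒳 o').card : ℝ)))⁻¹ := inv_pos.mpr hEpos
  have key := pr_PE_eq P0 𝒳 PE hPE1 hPE2
  refine ⟨?_, ?_, ?_, ?_⟩
  · -- (PN)(a)
    intro F hF
    have hzero : ∀ o ∈ (Finset.univ : Finset Ω₀),
        (if o ∈ F then P0 o else 0) = 0 := by
      rw [← Finset.sum_eq_zero_iff_of_nonneg]
      · exact hF
      · intro o _; by_cases h : o ∈ F <;> simp [h, hP0.1 o]
    rw [key, Finset.sum_eq_zero, mul_zero]
    intro o _
    refine Finset.sum_eq_zero fun x _ => ?_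
    simp only [Set.mem_setOf_eq]
    by_cases h : o ∈ F
    · have h0 : P0 o = 0 := by simpa [h] using hzero o (Finset.mem_univ o)
      simp [h0]
    · simp [h]
  · -- (PN)(b)
    rw [key, inv_mul_eq_one₀ (ne_of_gt hEpos), ex]
    refine Finset.sum_congr rfl fun o _ => ?_
    have h1 : ∀ y : K, ((((o, some y) : Ω₀ × Option K) ∈
        {ω : Ω₀ × Option K | ∃ z : K, ω.2 = some z ∧ z ∈ 𝒳 ω.1} ∧ y ∈ 𝒳 o) ↔ y ∈ 𝒳 o) := by
      intro y; simp [Set.mem_setOf_eq]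
    simp only [h1]
    rw [Finset.sum_ite_mem, Finset.univ_inter, Finset.sum_const, nsmul_eq_mul]
    ring
  · -- (PI)
    intro x B hBne hBpos
    have hcard : (0:ℝ) < (B.card : ℝ) := by
      exact_mod_cast Finset.card_pos.mpr (Finset.nonempty_iff_ne_empty.mpr hBne)
    set p := ∑ o : Ω₀, (if 𝒳 o = B then P0 o else 0) with hp
    have hnum : pr PE ({ω | ω.2 = some x} ∩ {ω | 𝒳 ω.1 = B})
        = (ex P0 (fun o' => ((𝒳 o').card : ℝ)))⁻¹ * (if x ∈ B then p else 0) := by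
      rw [key]
      congr 1
      rw [hp]
      by_cases hx : x ∈ B
      · simp only [hx, if_true]
        refine Finset.sum_congr rfl fun o _ => ?_
        by_cases hB : 𝒳 o = B
        · have h1 : ∀ y : K, ((((o, some y) : Ω₀ × Option K) ∈
              ({ω : Ω₀ × Option K | ω.2 = some x} ∩ {ω | 𝒳 ω.1 = B}) ∧ y ∈ 𝒳 o) ↔ y = x) := by
            intro y
            simp only [Set.mem_inter_iff, Set.mem_setOf_eq]
            constructor
            · rintro ⟨⟨h2, _⟩, _⟩; exact Option.some_inj.mp h2
            · rintro rfl; exact ⟨⟨rfl, hB⟩, by rw [hB]; exact hx⟩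
          simp [h1, hB]
          have h2 : ∀ y : K, ((y = x ∧ y ∈ B) ↔ y = x) :=
            fun y => ⟨And.left, fun h => ⟨h, by rw [h]; exact hx⟩⟩
          simp [h2]
        · have h1 : ∀ y : K, ¬((((o, some y) : Ω₀ × Option K) ∈
              ({ω : Ω₀ × Option K | ω.2 = some x} ∩ {ω | 𝒳 ω.1 = B}) ∧ y ∈ 𝒳 o)) := by
            intro y
            simp only [Set.mem_inter_iff, Set.mem_setOf_eq]
            rintro ⟨⟨_, h3⟩, _⟩; exact hB h3
          simp [h1, hB]
      · simp only [hx, if_false]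
        refine Finset.sum_eq_zero fun o _ => ?_
        have h1 : ∀ y : K, ¬((((o, some y) : Ω₀ × Option K) ∈
            ({ω : Ω₀ × Option K | ω.2 = some x} ∩ {ω | 𝒳 ω.1 = B}) ∧ y ∈ 𝒳 o)) := by
          intro y
          simp only [Set.mem_inter_iff, Set.mem_setOf_eq]
          rintro ⟨⟨h2, h3⟩, h4⟩
          obtain rfl := Option.some_inj.mp h2
          exact hx (h3 ▸ h4)
        simp [h1]
        have h2 : ∀ y : K, ¬((y = x ∧ 𝒳 o = B) ∧ y ∈ 𝒳 o) := by
          rintro y ⟨⟨rfl, hB2⟩, hm⟩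
          exact hx (hB2 ▸ hm)
        simp [h2]
    have hden : pr PE {ω | 𝒳 ω.1 = B}
        = (ex P0 (fun o' => ((𝒳 o').card : ℝ)))⁻¹ * ((B.card : ℝ) * p) := by
      rw [key]
      congr 1
      rw [hp, Finset.mul_sum]
      refine Finset.sum_congr rfl fun o _ => ?_
      by_cases hB : 𝒳 o = B
      · have h1 : ∀ y : K, ((((o, some y) : Ω₀ × Option K) ∈
            {ω : Ω₀ × Option K | 𝒳 ω.1 = B} ∧ y ∈ 𝒳 o) ↔ y ∈ B) := by
          intro y
          simp only [Set.mem_setOf_eq, hB]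
          tauto
        simp only [h1]
        rw [Finset.sum_ite_mem, Finset.univ_inter, Finset.sum_const, nsmul_eq_mul, if_pos hB]
      · have h1 : ∀ y : K, ¬((((o, some y) : Ω₀ × Option K) ∈
            {ω : Ω₀ × Option K | 𝒳 ω.1 = B} ∧ y ∈ 𝒳 o)) := by
          intro y
          simp only [Set.mem_setOf_eq]
          rintro ⟨h2, _⟩; exact hB h2
        simp [h1, hB]
    have hppos : 0 < p := by
      rw [hden, ← mul_assoc] at hBpos
      by_contra h
      push_neg at h
      have h2 : ((ex P0 (fun o' => ((𝒳 o').card : ℝ)))⁻¹ * (B.card : ℝ)) * p ≤ 0 :=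
        mul_nonpos_of_nonneg_of_nonpos (mul_pos hEinv hcard).le h
      linarith
    rw [cpr, hnum, hden]
    by_cases hx : x ∈ B
    · simp only [hx, if_true]
      field_simp
    · simp [hx]
  · -- (PEI)
    intro F x hpos
    have hnum : pr PE ({ω | ω.1 ∈ F} ∩ {ω | ω.2 = some x})
        = (ex P0 (fun o' => ((𝒳 o').card : ℝ)))⁻¹ * pr P0 (F ∩ {o | x ∈ 𝒳 o}) := by
      rw [key, pr]
      congr 1
      refine Finset.sum_congr rfl fun o _ => ?_
      simp only [Set.mem_inter_iff, Set.mem_setOf_eq]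
      by_cases hF : o ∈ F
      · by_cases hx : x ∈ 𝒳 o
        · have h1 : ∀ y : K, (((o ∈ F ∧ (some y : Option K) = some x) ∧ y ∈ 𝒳 o) ↔ y = x) := by
            intro y
            constructor
            · rintro ⟨⟨_, h2⟩, _⟩; exact Option.some_inj.mp h2
            · rintro rfl; exact ⟨⟨hF, rfl⟩, hx⟩
          simp [h1, hF, hx]
          have h2 : ∀ y : K, ((y = x ∧ y ∈ 𝒳 o) ↔ y = x) :=
            fun y => ⟨And.left, fun h => ⟨h, by rw [h]; exact hx⟩⟩
          simp [h2]
        · have h1 : ∀ y : K, ¬((o ∈ F ∧ (some y : Option K) = some x) ∧ y ∈ 𝒳 o) := by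
            rintro y ⟨⟨_, h2⟩, h4⟩
            obtain rfl := Option.some_inj.mp h2
            exact hx h4
          simp [h1, hF, hx]
          have h2 : ∀ y : K, ¬(y = x ∧ y ∈ 𝒳 o) := by
            rintro y ⟨rfl, hm⟩
            exact hx hm
          simp [h2]
      · have h1 : ∀ y : K, ¬((o ∈ F ∧ (some y : Option K) = some x) ∧ y ∈ 𝒳 o) :=
          fun y h => hF h.1.1
        simp [h1, hF]
    have hden : pr PE {ω | ω.2 = some x}
        = (ex P0 (fun o' => ((𝒳 o').card : ℝ)))⁻¹ * pr P0 {o | x ∈ 𝒳 o} := by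
      rw [key, pr]
      congr 1
      refine Finset.sum_congr rfl fun o _ => ?_
      simp only [Set.mem_setOf_eq]
      by_cases hx : x ∈ 𝒳 o
      · have h1 : ∀ y : K, (((some y : Option K) = some x ∧ y ∈ 𝒳 o) ↔ y = x) := by
          intro y
          constructor
          · rintro ⟨h2, _⟩; exact Option.some_inj.mp h2
          · rintro rfl; exact ⟨rfl, hx⟩
        simp [h1, hx]
        have h2 : ∀ y : K, ((y = x ∧ y ∈ 𝒳 o) ↔ y = x) :=
          fun y => ⟨And.left, fun h => ⟨h, by rw [h]; exact hx⟩⟩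
        simp [h2]
      · have h1 : ∀ y : K, ¬((some y : Option K) = some x ∧ y ∈ 𝒳 o) := by
          rintro y ⟨h2, h4⟩
          obtain rfl := Option.some_inj.mp h2
          exact hx h4
        simp [h1, hx]
        have h2 : ∀ y : K, ¬(y = x ∧ y ∈ 𝒳 o) := by
          rintro y ⟨rfl, hm⟩
          exact hx hm
        simp [h2]
    rw [cpr, hnum, hden, cpr, mul_div_mul_left _ _ (ne_of_gt hEinv)]
end

section
/- For the Thirder measure P_E and any objective event F, P_E(F) = E[1_F · X] / E[X], where X = |𝒳|. In particular P_E(S = x) = Q_x / E[X] where Q_x = P(x ∈ 𝒳), and P_E(𝒳 = B) = |B| · P(𝒳 = B) / E[X] for B ⊆ K. -/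
open scoped Classical
open Finset

/-- Theorem: for the Thirder measure `P_E` and any objective event `F`,
`P_E(F) = E[1_F X]/E[X]`; in particular `P_E(S = x) = Q_x/E[X]` and
`P_E(𝒳 = B) = |B|·P(𝒳 = B)/E[X]`. -/
theorem stmt2 {Ω₀ K : Type*} [Fintype Ω₀] [Fintype K] [DecidableEq K]
    (P0 : Ω₀ → ℝ) (𝒳 : Ω₀ → Finset K)
    (hP0 : IsProb P0)
    (hne : pr P0 {o | 𝒳 o = ∅} < 1)
    (PE : Ω₀ × Option K → ℝ)
    (hPE1 : ∀ (o : Ω₀) (x : K),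
      PE (o, some x) = (ex P0 (fun o' => ((𝒳 o').card : ℝ)))⁻¹ * P0 o *
        (if x ∈ 𝒳 o then 1 else 0))
    (hPE2 : ∀ o : Ω₀, PE (o, none) = 0) :
    (∀ F : Set Ω₀,
      pr PE {ω | ω.1 ∈ F} =
        ex P0 (fun o => (if o ∈ F then 1 else 0) * ((𝒳 o).card : ℝ)) /
          ex P0 (fun o => ((𝒳 o).card : ℝ))) ∧
    (∀ x : K,
      pr PE {ω | ω.2 = some x} =
        pr P0 {o | x ∈ 𝒳 o} / ex P0 (fun o => ((𝒳 o).card : ℝ))) ∧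
    (∀ B : Finset K,
      pr PE {ω | 𝒳 ω.1 = B} =
        (B.card : ℝ) * pr P0 {o | 𝒳 o = B} / ex P0 (fun o => ((𝒳 o).card : ℝ))) := by
  set E := ex P0 (fun o => ((𝒳 o).card : ℝ)) with hE
  have key : ∀ F : Set Ω₀,
      pr PE {ω | ω.1 ∈ F} =
        ex P0 (fun o => (if o ∈ F then 1 else 0) * ((𝒳 o).card : ℝ)) / E := by
    intro F
    unfold pr ex
    rw [Fintype.sum_prod_type]
    have h1 : ∀ o : Ω₀, (∑ s : Option K, if (o, s) ∈ {ω : Ω₀ × Option K | ω.1 ∈ F} then PE (o, s) else 0)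
        = (if o ∈ F then 1 else 0) * (E⁻¹ * (P0 o * (𝒳 o).card)) := by
      intro o
      by_cases hF : o ∈ F
      · simp only [Set.mem_setOf_eq, hF, if_true, one_mul]
        rw [Fintype.sum_option, hPE2]
        simp only [hPE1, ← hE, mul_ite, mul_one, mul_zero, zero_add]
        rw [Finset.sum_ite_mem, Finset.univ_inter, Finset.sum_const, nsmul_eq_mul]
        ring
      · simp [Set.mem_setOf_eq, hF]
    rw [Finset.sum_congr rfl (fun o _ => h1 o)]
    rw [div_eq_inv_mul, Finset.mul_sum]
    congr 1; ext o; ring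
  refine ⟨key, ?_, ?_⟩
  · intro x
    unfold pr
    rw [Fintype.sum_prod_type]
    simp only [Set.mem_setOf_eq]
    have h1 : ∀ o : Ω₀, (∑ s : Option K, if s = some x then PE (o, s) else 0)
        = E⁻¹ * (if x ∈ 𝒳 o then P0 o else 0) := by
      intro o
      rw [Fintype.sum_option]
      simp only [Option.some.injEq, reduceCtorEq, if_false, zero_add]
      rw [Finset.sum_ite_eq' (Finset.univ) x (fun y => PE (o, some y))]
      simp only [Finset.mem_univ, if_true, hPE1, ← hE]
      by_cases hx : x ∈ 𝒳 o <;> simp [hx]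
    refine Eq.trans (Finset.sum_congr rfl fun o _ => Eq.trans
      (Finset.sum_congr rfl fun s _ => by congr) (h1 o)) ?_
    rw [← Finset.mul_sum, div_eq_inv_mul]
  · intro B
    have h2 : {ω : Ω₀ × Option K | 𝒳 ω.1 = B} = {ω | ω.1 ∈ {o | 𝒳 o = B}} := rfl
    rw [h2, key {o | 𝒳 o = B}]
    congr 1
    unfold ex pr
    rw [Finset.mul_sum]
    apply Finset.sum_congr rfl
    intro o _
    by_cases h : 𝒳 o = B <;> simp [Set.mem_setOf_eq, h] <;> ring
end

section
/- Let P̃(F) = P(F | 𝒳 ≠ ∅) be the objective probability conditioned on the existence of at least one observer, and let P̃_E be the measure defined by P̃_E(F ∩ {S=x}) = (1/Ẽ[X]) P̃(F ∩ {x ∈ 𝒳}). Then P̃_E = P_E, i.e. conditioning the objective law on 𝒳 ≠ ∅ does not change the Thirder measure. -/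
open scoped Classical
open Finset

/-- Theorem: conditioning the objective law on `𝒳 ≠ ∅` does not change the
Thirder measure: with `P̃ = P(· | 𝒳 ≠ ∅)` and `P̃_E` the Thirder measure built
from `P̃`, one has `P̃_E = P_E`. -/
theorem stmt3 {Ω₀ K : Type*} [Fintype Ω₀] [Fintype K] [DecidableEq K]
    (P0 : Ω₀ → ℝ) (𝒳 : Ω₀ → Finset K)
    (hP0 : IsProb P0)
    (hpos : 0 < pr P0 {o | 𝒳 o ≠ ∅})
    (PE : Ω₀ × Option K → ℝ)
    (hPE1 : ∀ (o : Ω₀) (x : K),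
      PE (o, some x) = (ex P0 (fun o' => ((𝒳 o').card : ℝ)))⁻¹ * P0 o *
        (if x ∈ 𝒳 o then 1 else 0))
    (hPE2 : ∀ o : Ω₀, PE (o, none) = 0)
    -- the conditioned objective law P̃
    (Pt : Ω₀ → ℝ)
    (hPt : ∀ o : Ω₀, Pt o = if 𝒳 o = ∅ then 0 else P0 o / pr P0 {o' | 𝒳 o' ≠ ∅})
    -- the Thirder measure P̃_E built from P̃
    (PtE : Ω₀ × Option K → ℝ)
    (hPtE1 : ∀ (o : Ω₀) (x : K),
      PtE (o, some x) = (ex Pt (fun o' => ((𝒳 o').card : ℝ)))⁻¹ * Pt o *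
        (if x ∈ 𝒳 o then 1 else 0))
    (hPtE2 : ∀ o : Ω₀, PtE (o, none) = 0) :
    ∀ G : Set (Ω₀ × Option K), pr PtE G = pr PE G := by

  set Z := pr P0 {o' | 𝒳 o' ≠ ∅} with hZ
  have hZ0 : Z ≠ 0 := ne_of_gt hpos
  have hex : ex Pt (fun o' => ((𝒳 o').card : ℝ))
      = (ex P0 (fun o' => ((𝒳 o').card : ℝ))) / Z := by
    simp only [ex]
    rw [eq_div_iff hZ0, Finset.sum_mul]
    apply Finset.sum_congr rfl
    intro o _
    rw [hPt o]
    by_cases h : 𝒳 o = ∅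
    · simp [h]
    · rw [if_neg h]
      field_simp
  have hpoint : ∀ p : Ω₀ × Option K, PtE p = PE p := by
    rintro ⟨o, x⟩
    cases x with
    | none => rw [hPE2, hPtE2]
    | some x =>
      rw [hPE1, hPtE1, hex, hPt o]
      by_cases h : x ∈ 𝒳 o
      · have hne : 𝒳 o ≠ ∅ := Finset.ne_empty_of_mem h
        have hE : 0 < ex P0 (fun o' => ((𝒳 o').card : ℝ)) := by
          refine lt_of_lt_of_le hpos ?_
          rw [hZ]
          unfold pr ex
          refine Finset.sum_le_sum fun o' _ => ?_
          by_cases h' : 𝒳 o' ≠ ∅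
          · have : (1:ℝ) ≤ ((𝒳 o').card : ℝ) := by
              exact_mod_cast Finset.card_pos.mpr (Finset.nonempty_of_ne_empty h')
            simpa [h'] using le_mul_of_one_le_right (hP0.1 o') this
          · simp only [Set.mem_setOf_eq, h', if_false]
            exact mul_nonneg (hP0.1 o') (Nat.cast_nonneg _)
        rw [if_neg hne, if_pos h]
        field_simp
      · simp [h]
  intro G
  unfold pr
  exact Finset.sum_congr rfl fun p _ => by rw [hpoint p]
end

section
/- Restriction property: Let 𝒳' be a random subset with 𝒳' ⊆ 𝒳 and P(𝒳' = ∅) < 1, and define P'_E by P'_E(F ∩ {S=x}) = (1/E[|𝒳'|]) P(F ∩ {x ∈ 𝒳'}). Then P_E(S ∈ 𝒳') = E[|𝒳'|]/E[|𝒳|] > 0, and for every event G in ℱ, P_E(G | S ∈ 𝒳') = P'_E(G). -/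
open scoped Classical
open Finset

lemma aux_pos {Ω₀ K : Type*} [Fintype Ω₀] (μ : Ω₀ → ℝ) (f : Ω₀ → Finset K)
    (h0 : ∀ a, 0 ≤ μ a) (h1 : ∑ a : Ω₀, μ a = 1)
    (hne : pr μ {o | f o = ∅} < 1) :
    0 < ∑ a : Ω₀, μ a * ((f a).card : ℝ) := by
  have h2 : ∑ a : Ω₀, (if f a = ∅ then 0 else μ a) = 1 - pr μ {o | f o = ∅} := by
    unfold pr at *
    rw [← h1, ← Finset.sum_sub_distrib]
    apply Finset.sum_congr rfl
    intro a _
    simp only [Set.mem_setOf_eq]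
    split_ifs <;> ring
  have h3 : 0 < ∑ a : Ω₀, (if f a = ∅ then 0 else μ a) := by rw [h2]; linarith
  refine lt_of_lt_of_le h3 (Finset.sum_le_sum ?_)
  intro a _
  split_ifs with h
  · exact mul_nonneg (h0 a) (by positivity)
  · have hc : 1 ≤ ((f a).card : ℝ) := by
      have := Finset.card_pos.mpr (Finset.nonempty_iff_ne_empty.mpr h)
      exact_mod_cast this
    nlinarith [h0 a]

/-- Restriction property of the Thirder measure: if `𝒳' ⊆ 𝒳` with
`P(𝒳' = ∅) < 1`, then `P_E(S ∈ 𝒳') = E[|𝒳'|]/E[|𝒳|] > 0` and, for every event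
`G`, `P_E(G | S ∈ 𝒳') = P'_E(G)`, where `P'_E` is the Thirder measure built
from `𝒳'`. -/
theorem stmt4 {Ω₀ K : Type*} [Fintype Ω₀] [Fintype K] [DecidableEq K]
    (P0 : Ω₀ → ℝ) (𝒳 𝒳' : Ω₀ → Finset K)
    (hP0 : IsProb P0)
    (hne : pr P0 {o | 𝒳 o = ∅} < 1)
    (hsub : ∀ o : Ω₀, 𝒳' o ⊆ 𝒳 o)
    (hne' : pr P0 {o | 𝒳' o = ∅} < 1)
    (PE : Ω₀ × Option K → ℝ)
    (hPE1 : ∀ (o : Ω₀) (x : K),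
      PE (o, some x) = (ex P0 (fun o' => ((𝒳 o').card : ℝ)))⁻¹ * P0 o *
        (if x ∈ 𝒳 o then 1 else 0))
    (hPE2 : ∀ o : Ω₀, PE (o, none) = 0)
    (PE' : Ω₀ × Option K → ℝ)
    (hPE'1 : ∀ (o : Ω₀) (x : K),
      PE' (o, some x) = (ex P0 (fun o' => ((𝒳' o').card : ℝ)))⁻¹ * P0 o *
        (if x ∈ 𝒳' o then 1 else 0))
    (hPE'2 : ∀ o : Ω₀, PE' (o, none) = 0) :
    0 < pr PE {ω | ∃ x : K, ω.2 = some x ∧ x ∈ 𝒳' ω.1} ∧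
    pr PE {ω | ∃ x : K, ω.2 = some x ∧ x ∈ 𝒳' ω.1}
      = ex P0 (fun o => ((𝒳' o).card : ℝ)) / ex P0 (fun o => ((𝒳 o).card : ℝ)) ∧
    (∀ G : Set (Ω₀ × Option K),
      cpr PE G {ω | ∃ x : K, ω.2 = some x ∧ x ∈ 𝒳' ω.1} = pr PE' G) := by
  obtain ⟨h0, h1⟩ := hP0
  set E := ex P0 (fun o => ((𝒳 o).card : ℝ)) with hEdef
  set E' := ex P0 (fun o => ((𝒳' o).card : ℝ)) with hE'def
  have hEpos : 0 < E := aux_pos P0 𝒳 h0 h1 hne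
  have hE'pos : 0 < E' := aux_pos P0 𝒳' h0 h1 hne'
  set B : Set (Ω₀ × Option K) := {ω | ∃ x : K, ω.2 = some x ∧ x ∈ 𝒳' ω.1} with hBdef
  have key : ∀ G : Set (Ω₀ × Option K),
      pr PE (G ∩ B) =
        E⁻¹ * ∑ o : Ω₀, ∑ x : K,
          (if (o, some x) ∈ G ∧ x ∈ 𝒳' o then P0 o else 0) := by
    intro G
    unfold pr
    rw [Fintype.sum_prod_type, Finset.mul_sum]
    apply Finset.sum_congr rfl
    intro o _
    rw [Fintype.sum_option, Finset.mul_sum]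
    rw [hPE2 o, ite_self, zero_add]
    apply Finset.sum_congr rfl
    intro x _
    have hmem : (o, some x) ∈ G ∩ B ↔ ((o, some x) ∈ G ∧ x ∈ 𝒳' o) := by
      simp [hBdef, Set.mem_setOf_eq]
    rw [hPE1]
    by_cases hc : (o, some x) ∈ G ∧ x ∈ 𝒳' o
    · rw [if_pos (hmem.mpr hc), if_pos hc, if_pos (hsub o hc.2)]; ring
    · rw [if_neg (fun hh => hc (hmem.mp hh)), if_neg hc]; ring
  have key' : ∀ G : Set (Ω₀ × Option K),
      pr PE' G =
        E'⁻¹ * ∑ o : Ω₀, ∑ x : K,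
          (if (o, some x) ∈ G ∧ x ∈ 𝒳' o then P0 o else 0) := by
    intro G
    unfold pr
    rw [Fintype.sum_prod_type, Finset.mul_sum]
    apply Finset.sum_congr rfl
    intro o _
    rw [Fintype.sum_option, Finset.mul_sum]
    rw [hPE'2 o, ite_self, zero_add]
    apply Finset.sum_congr rfl
    intro x _
    rw [hPE'1]
    by_cases hg : (o, some x) ∈ G
    · by_cases hx : x ∈ 𝒳' o
      · rw [if_pos hg, if_pos hx, if_pos ⟨hg, hx⟩]; ring
      · rw [if_pos hg, if_neg hx, if_neg (fun hh => hx hh.2)]; ring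
    · rw [if_neg hg, if_neg (fun hh => hg hh.1)]; ring
  have hB : pr PE B = E⁻¹ * E' := by
    have := key Set.univ
    rw [Set.univ_inter] at this
    rw [this]
    congr 1
    rw [hE'def]
    unfold ex
    apply Finset.sum_congr rfl
    intro o _
    simp only [Set.mem_univ, true_and]
    rw [Finset.sum_ite_mem, Finset.univ_inter, Finset.sum_const, nsmul_eq_mul]
    ring
  refine ⟨?_, ?_, ?_⟩
  · rw [hB]; positivity
  · rw [hB]; field_simp
  · intro G
    rw [cpr, hB, key G, key' G,
      mul_div_mul_left _ _ (inv_ne_zero hEpos.ne'), div_eq_inv_mul]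
end

section
/- The Halfer measure P_L, defined by P_L(F ∩ {𝒳 = B} ∩ {S = x}) = |B|^{-1} P(F ∩ {𝒳 = B} | 𝒳 ≠ ∅) for x ∈ B and = 0 for x ∉ B, is the unique probability on (Ω, ℱ) satisfying (PN), (PP), and the strengthened indifference principle: P_A(S = x | F ∩ {𝒳 = B}) = |B|^{-1} for all x ∈ B and objective F with P_A(F ∩ {𝒳 = B}) > 0. -/
open scoped Classical
open Finset

lemma my_pr_singleton {α : Type*} [Fintype α] (μ : α → ℝ) (a : α) : pr μ {a} = μ a := by
  classical
  simp [pr]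

lemma my_point_eq_zero {α : Type*} [Fintype α] {μ : α → ℝ} (h0 : ∀ a, 0 ≤ μ a)
    {A : Set α} (hA : pr μ A = 0) {a : α} (ha : a ∈ A) : μ a = 0 := by
  classical
  have h := (Finset.sum_eq_zero_iff_of_nonneg (fun b _ => by
     by_cases hb : b ∈ A <;> simp [hb, h0 b])).mp hA a (Finset.mem_univ a)
  simpa [ha] using h

/-- Proposition: the Halfer measure `P_L`, defined by
`P_L(F ∩ {𝒳 = B} ∩ {S = x}) = |B|⁻¹ P(F ∩ {𝒳 = B} | 𝒳 ≠ ∅)` for `x ∈ B` and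
`0` for `x ∉ B`, satisfies (PN), (PP) and the strengthened indifference
principle, and it is the unique probability on `(Ω, ℱ)` with these properties. -/
theorem stmt6 {Ω₀ K : Type*} [Fintype Ω₀] [Fintype K] [DecidableEq K]
    (P0 : Ω₀ → ℝ) (𝒳 : Ω₀ → Finset K)
    (hP0 : IsProb P0)
    (hne : pr P0 {o | 𝒳 o = ∅} < 1)
    (PL : Ω₀ × Option K → ℝ) (hPLprob : IsProb PL)
    (hPLdef : ∀ (F : Set Ω₀) (B : Finset K) (x : K),
      pr PL ({ω | ω.1 ∈ F} ∩ {ω | 𝒳 ω.1 = B} ∩ {ω | ω.2 = some x})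
        = if x ∈ B then (B.card : ℝ)⁻¹ * cpr P0 (F ∩ {o | 𝒳 o = B}) {o | 𝒳 o ≠ ∅}
          else 0) :
    -- P_L satisfies (PN)
    ((∀ F : Set Ω₀, pr P0 F = 0 → pr PL {ω | ω.1 ∈ F} = 0) ∧
      pr PL {ω | ∃ x : K, ω.2 = some x ∧ x ∈ 𝒳 ω.1} = 1) ∧
    -- P_L satisfies (PP)
    (∀ F : Set Ω₀, pr PL {ω | ω.1 ∈ F} = cpr P0 F {o | 𝒳 o ≠ ∅}) ∧
    -- P_L satisfies the strengthened principle of indifference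
    (∀ (x : K) (B : Finset K) (F : Set Ω₀), x ∈ B →
      0 < pr PL ({ω | ω.1 ∈ F} ∩ {ω | 𝒳 ω.1 = B}) →
      cpr PL {ω | ω.2 = some x} ({ω | ω.1 ∈ F} ∩ {ω | 𝒳 ω.1 = B}) = (B.card : ℝ)⁻¹) ∧
    -- uniqueness: any probability with these three properties agrees with P_L
    (∀ PA : Ω₀ × Option K → ℝ, IsProb PA →
      ((∀ F : Set Ω₀, pr P0 F = 0 → pr PA {ω | ω.1 ∈ F} = 0) ∧
        pr PA {ω | ∃ x : K, ω.2 = some x ∧ x ∈ 𝒳 ω.1} = 1) →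
      (∀ F : Set Ω₀, pr PA {ω | ω.1 ∈ F} = cpr P0 F {o | 𝒳 o ≠ ∅}) →
      (∀ (x : K) (B : Finset K) (F : Set Ω₀), x ∈ B →
        0 < pr PA ({ω | ω.1 ∈ F} ∩ {ω | 𝒳 ω.1 = B}) →
        cpr PA {ω | ω.2 = some x} ({ω | ω.1 ∈ F} ∩ {ω | 𝒳 ω.1 = B}) = (B.card : ℝ)⁻¹) →
      ∀ G : Set (Ω₀ × Option K), pr PA G = pr PL G) := by
  set Z := pr P0 {o | 𝒳 o ≠ ∅} with hZdef
  have hsplit : pr P0 {o | 𝒳 o = ∅} + Z = 1 := by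
    rw [hZdef]
    unfold pr
    rw [← Finset.sum_add_distrib, ← hP0.2]
    apply Finset.sum_congr rfl
    intro o _
    by_cases h : 𝒳 o = ∅ <;> simp [h]
  have hZpos : 0 < Z := by linarith
  have hZne : Z ≠ 0 := ne_of_gt hZpos
  -- pointwise formula for PL on (o, some x)
  have hsome : ∀ (o : Ω₀) (x : K),
      PL (o, some x) = if x ∈ 𝒳 o then ((𝒳 o).card : ℝ)⁻¹ * (P0 o / Z) else 0 := by
    intro o x
    have h := hPLdef {o} (𝒳 o) x
    have hset : ({ω : Ω₀ × Option K | ω.1 ∈ ({o} : Set Ω₀)} ∩ {ω | 𝒳 ω.1 = 𝒳 o}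
        ∩ {ω | ω.2 = some x}) = {(o, some x)} := by
      ext ⟨a, b⟩
      simp only [Set.mem_inter_iff, Set.mem_setOf_eq, Set.mem_singleton_iff, Prod.mk.injEq]
      constructor
      · rintro ⟨⟨h1, _⟩, h2⟩; exact ⟨h1, h2⟩
      · rintro ⟨rfl, rfl⟩; exact ⟨⟨rfl, rfl⟩, rfl⟩
    rw [hset, my_pr_singleton] at h
    rw [h]
    by_cases hx : x ∈ 𝒳 o
    · have hBne : 𝒳 o ≠ ∅ := Finset.ne_empty_of_mem hx
      have hset2 : ((({o} : Set Ω₀) ∩ {o' | 𝒳 o' = 𝒳 o}) ∩ {o' | 𝒳 o' ≠ ∅}) = {o} := by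
        ext a
        simp only [Set.mem_inter_iff, Set.mem_setOf_eq, Set.mem_singleton_iff]
        constructor
        · rintro ⟨⟨h1, _⟩, _⟩; exact h1
        · rintro rfl; exact ⟨⟨rfl, rfl⟩, hBne⟩
      simp only [hx, if_true]
      unfold cpr
      rw [hset2, my_pr_singleton, ← hZdef]
    · simp [hx]
  -- the sum of PL over the second coordinate
  have hinner : ∀ o : Ω₀,
      (∑ x : K, PL (o, some x)) = (if 𝒳 o ≠ ∅ then P0 o else 0) / Z := by
    intro o
    by_cases hB : 𝒳 o = ∅
    · simp [hsome, hB]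
    · have hcardne : ((𝒳 o).card : ℝ) ≠ 0 := by
        simpa [Finset.card_eq_zero] using hB
      have h1 : (∑ x : K, PL (o, some x))
          = ∑ x : K, if x ∈ 𝒳 o then ((𝒳 o).card : ℝ)⁻¹ * (P0 o / Z) else 0 :=
        Finset.sum_congr rfl fun x _ => hsome o x
      rw [h1, Finset.sum_ite_mem, Finset.univ_inter, Finset.sum_const, nsmul_eq_mul, if_pos hB]
      field_simp
  -- total mass of the "some" part is 1
  have hsum_some : (∑ o : Ω₀, (if 𝒳 o ≠ ∅ then P0 o else 0) / Z) = 1 := by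
    rw [← Finset.sum_div]
    have h2 : (∑ o : Ω₀, if 𝒳 o ≠ ∅ then P0 o else 0) = Z := by
      rw [hZdef]; unfold pr
      exact Finset.sum_congr rfl fun o _ => by by_cases h : 𝒳 o ≠ ∅ <;> simp [h]
    rw [h2, div_self hZne]
  -- PL vanishes on (o, none)
  have hnone : ∀ o : Ω₀, PL (o, none) = 0 := by
    have h1 : (∑ o : Ω₀, (PL (o, none) + ∑ x : K, PL (o, some x))) = 1 := by
      rw [← hPLprob.2, Fintype.sum_prod_type]
      exact Finset.sum_congr rfl fun o _ => (Fintype.sum_option (fun b => PL (o, b))).symm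
    rw [Finset.sum_add_distrib] at h1
    have h3 : (∑ o : Ω₀, ∑ x : K, PL (o, some x)) = 1 := by
      rw [← hsum_some]
      exact Finset.sum_congr rfl fun o _ => hinner o
    have hz : (∑ o : Ω₀, PL (o, none)) = 0 := by linarith
    intro o
    exact (Finset.sum_eq_zero_iff_of_nonneg (fun a _ => hPLprob.1 _)).mp hz o (Finset.mem_univ o)
  -- pr of PL of objective events
  have hprPL : ∀ S : Set Ω₀, pr PL {ω | ω.1 ∈ S} = pr P0 (S ∩ {o | 𝒳 o ≠ ∅}) / Z := by
    intro S
    unfold pr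
    rw [Fintype.sum_prod_type, Finset.sum_div]
    apply Finset.sum_congr rfl
    intro o _
    rw [Fintype.sum_option]
    by_cases hS : o ∈ S
    · rw [if_pos (show ((o, (none : Option K)) ∈ {ω : Ω₀ × Option K | ω.1 ∈ S}) from hS),
        hnone o, zero_add]
      have hxall : (∑ x : K, if ((o, some x) : Ω₀ × Option K) ∈ {ω : Ω₀ × Option K | ω.1 ∈ S}
          then PL (o, some x) else 0) = ∑ x : K, PL (o, some x) :=
        Finset.sum_congr rfl fun x _ => if_pos hS
      rw [hxall, hinner o]
      by_cases hB : 𝒳 o ≠ ∅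
      · rw [if_pos hB, if_pos (show o ∈ S ∩ {o | 𝒳 o ≠ ∅} from ⟨hS, hB⟩)]
      · rw [if_neg hB, if_neg (show o ∉ S ∩ {o | 𝒳 o ≠ ∅} from fun h => hB h.2)]
    · rw [if_neg (show ¬((o, (none : Option K)) ∈ {ω : Ω₀ × Option K | ω.1 ∈ S}) from hS),
        if_neg (show o ∉ S ∩ {o | 𝒳 o ≠ ∅} from fun h => hS h.1)]
      have hxall : (∑ x : K, if ((o, some x) : Ω₀ × Option K) ∈ {ω : Ω₀ × Option K | ω.1 ∈ S}
          then PL (o, some x) else 0) = 0 :=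
        Finset.sum_eq_zero fun x _ => if_neg hS
      rw [hxall]
      simp
  -- (PP)
  have hPP : ∀ F : Set Ω₀, pr PL {ω | ω.1 ∈ F} = cpr P0 F {o | 𝒳 o ≠ ∅} := by
    intro F
    rw [hprPL]
    unfold cpr
    rw [← hZdef]
  -- (PN) part 1
  have hPN1 : ∀ F : Set Ω₀, pr P0 F = 0 → pr PL {ω | ω.1 ∈ F} = 0 := by
    intro F hF
    rw [hprPL]
    have h0 : pr P0 (F ∩ {o | 𝒳 o ≠ ∅}) = 0 := by
      unfold pr
      apply Finset.sum_eq_zero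
      intro o _
      by_cases ho : o ∈ F ∩ {o | 𝒳 o ≠ ∅}
      · rw [if_pos ho, my_point_eq_zero hP0.1 hF ho.1]
      · rw [if_neg ho]
    rw [h0, zero_div]
  -- (PN) part 2
  have hPN2 : pr PL {ω : Ω₀ × Option K | ∃ x : K, ω.2 = some x ∧ x ∈ 𝒳 ω.1} = 1 := by
    have key : pr PL {ω : Ω₀ × Option K | ∃ x : K, ω.2 = some x ∧ x ∈ 𝒳 ω.1}
        = ∑ o : Ω₀, (if 𝒳 o ≠ ∅ then P0 o else 0) / Z := by
      unfold pr
      rw [Fintype.sum_prod_type]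
      apply Finset.sum_congr rfl
      intro o _
      rw [Fintype.sum_option]
      rw [if_neg (show ¬((o, (none : Option K)) ∈
        {ω : Ω₀ × Option K | ∃ x : K, ω.2 = some x ∧ x ∈ 𝒳 ω.1}) by simp), zero_add,
        ← hinner o]
      apply Finset.sum_congr rfl
      intro x _
      by_cases hx : x ∈ 𝒳 o
      · rw [if_pos (show ((o, some x) : Ω₀ × Option K) ∈
          {ω : Ω₀ × Option K | ∃ x : K, ω.2 = some x ∧ x ∈ 𝒳 ω.1} from ⟨x, rfl, hx⟩)]
      · rw [if_neg (show ¬(((o, some x) : Ω₀ × Option K) ∈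
          {ω : Ω₀ × Option K | ∃ x : K, ω.2 = some x ∧ x ∈ 𝒳 ω.1}) by simp [hx]),
          hsome, if_neg hx]
    rw [key]
    exact hsum_some
  -- the denominator in the indifference principle
  have habs : ∀ (F : Set Ω₀) (B : Finset K), B ≠ ∅ →
      ((F ∩ {o | 𝒳 o = B}) ∩ {o | 𝒳 o ≠ ∅}) = F ∩ {o | 𝒳 o = B} := by
    intro F B hB
    ext a
    simp only [Set.mem_inter_iff, Set.mem_setOf_eq]
    constructor
    · rintro ⟨h, _⟩; exact h
    · rintro ⟨h1, h2⟩; exact ⟨⟨h1, h2⟩, by rw [h2]; exact hB⟩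
  have hden : ∀ (F : Set Ω₀) (B : Finset K), B ≠ ∅ →
      pr PL ({ω | ω.1 ∈ F} ∩ {ω | 𝒳 ω.1 = B}) = pr P0 (F ∩ {o | 𝒳 o = B}) / Z := by
    intro F B hB
    have hset : ({ω : Ω₀ × Option K | ω.1 ∈ F} ∩ {ω | 𝒳 ω.1 = B})
        = {ω : Ω₀ × Option K | ω.1 ∈ F ∩ {o | 𝒳 o = B}} := by
      ext ⟨a, b⟩
      simp [Set.mem_inter_iff]
    rw [hset, hprPL, habs F B hB]
  -- indifference for PL
  have hindPL : ∀ (x : K) (B : Finset K) (F : Set Ω₀), x ∈ B →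
      0 < pr PL ({ω | ω.1 ∈ F} ∩ {ω | 𝒳 ω.1 = B}) →
      cpr PL {ω | ω.2 = some x} ({ω | ω.1 ∈ F} ∩ {ω | 𝒳 ω.1 = B}) = (B.card : ℝ)⁻¹ := by
    intro x B F hx hpos
    have hB : B ≠ ∅ := Finset.ne_empty_of_mem hx
    have hd := hden F B hB
    unfold cpr
    have hsetc : ({ω : Ω₀ × Option K | ω.2 = some x} ∩ ({ω | ω.1 ∈ F} ∩ {ω | 𝒳 ω.1 = B}))
        = ({ω : Ω₀ × Option K | ω.1 ∈ F} ∩ {ω | 𝒳 ω.1 = B} ∩ {ω | ω.2 = some x}) := by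
      ext ω
      simp only [Set.mem_inter_iff, Set.mem_setOf_eq]
      tauto
    rw [hsetc, hPLdef, if_pos hx]
    have hcpr : cpr P0 (F ∩ {o | 𝒳 o = B}) {o | 𝒳 o ≠ ∅}
        = pr P0 (F ∩ {o | 𝒳 o = B}) / Z := by
      unfold cpr
      rw [habs F B hB, ← hZdef]
    rw [hcpr, hd]
    have hdpos : pr P0 (F ∩ {o | 𝒳 o = B}) / Z ≠ 0 := by
      rw [← hd]; exact ne_of_gt hpos
    rw [mul_div_assoc, div_self hdpos, mul_one]
  refine ⟨⟨hPN1, hPN2⟩, hPP, hindPL, ?_⟩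
  rintro PA hPAprob ⟨hAPN1, hAPN2⟩ hAPP hAind G
  -- PA vanishes off the location event
  have hAzero : ∀ ω : Ω₀ × Option K, (¬ ∃ x : K, ω.2 = some x ∧ x ∈ 𝒳 ω.1) → PA ω = 0 := by
    intro ω hω
    have hc : pr PA {ω : Ω₀ × Option K | ¬ ∃ x : K, ω.2 = some x ∧ x ∈ 𝒳 ω.1} = 0 := by
      have hsplit2 : pr PA {ω : Ω₀ × Option K | ∃ x : K, ω.2 = some x ∧ x ∈ 𝒳 ω.1}
          + pr PA {ω : Ω₀ × Option K | ¬ ∃ x : K, ω.2 = some x ∧ x ∈ 𝒳 ω.1} = 1 := by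
        unfold pr
        rw [← Finset.sum_add_distrib, ← hPAprob.2]
        apply Finset.sum_congr rfl
        intro a _
        by_cases h : ∃ x : K, a.2 = some x ∧ x ∈ 𝒳 a.1 <;> simp [h]
      linarith [hAPN2]
    exact my_point_eq_zero hPAprob.1 hc hω
  -- pointwise agreement
  have hAfun : ∀ ω : Ω₀ × Option K, PA ω = PL ω := by
    rintro ⟨o, b⟩
    cases b with
    | none =>
        rw [hnone o]
        exact hAzero (o, none) (by simp)
    | some x =>
        rw [hsome o x]
        by_cases hx : x ∈ 𝒳 o
        · rw [if_pos hx]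
          by_cases hP : P0 o = 0
          · have hprF : pr P0 ({o} : Set Ω₀) = 0 := by rw [my_pr_singleton, hP]
            have h0 : pr PA {ω : Ω₀ × Option K | ω.1 ∈ ({o} : Set Ω₀)} = 0 := hAPN1 _ hprF
            have : PA (o, some x) = 0 :=
              my_point_eq_zero hPAprob.1 h0 (by simp : ((o, some x) : Ω₀ × Option K).1 ∈ ({o} : Set Ω₀))
            rw [this, hP]
            simp
          · have hBne : 𝒳 o ≠ ∅ := Finset.ne_empty_of_mem hx
            -- compute the conditioning event's PA-probability
            have hsetE : ({ω : Ω₀ × Option K | ω.1 ∈ ({o} : Set Ω₀)} ∩ {ω | 𝒳 ω.1 = 𝒳 o})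
                = {ω : Ω₀ × Option K | ω.1 ∈ ({o} : Set Ω₀)} := by
              ext ⟨a, c⟩
              simp only [Set.mem_inter_iff, Set.mem_setOf_eq, Set.mem_singleton_iff]
              constructor
              · rintro ⟨h1, _⟩; exact h1
              · rintro rfl; exact ⟨rfl, rfl⟩
            have hsetO : (({o} : Set Ω₀) ∩ {o' | 𝒳 o' ≠ ∅}) = ({o} : Set Ω₀) := by
              ext a
              simp only [Set.mem_inter_iff, Set.mem_setOf_eq, Set.mem_singleton_iff]
              constructor
              · rintro ⟨h1, _⟩; exact h1
              · rintro rfl; exact ⟨rfl, hBne⟩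
            have hAE : pr PA ({ω : Ω₀ × Option K | ω.1 ∈ ({o} : Set Ω₀)} ∩ {ω | 𝒳 ω.1 = 𝒳 o})
                = P0 o / Z := by
              rw [hsetE, hAPP ({o} : Set Ω₀)]
              unfold cpr
              rw [hsetO, my_pr_singleton, ← hZdef]
            have hPpos : 0 < P0 o := lt_of_le_of_ne (hP0.1 o) (Ne.symm hP)
            have hpos : 0 < pr PA ({ω : Ω₀ × Option K | ω.1 ∈ ({o} : Set Ω₀)} ∩ {ω | 𝒳 ω.1 = 𝒳 o}) := by
              rw [hAE]; positivity
            have hind := hAind x (𝒳 o) ({o} : Set Ω₀) hx hpos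
            unfold cpr at hind
            have hsetN : ({ω : Ω₀ × Option K | ω.2 = some x}
                ∩ ({ω : Ω₀ × Option K | ω.1 ∈ ({o} : Set Ω₀)} ∩ {ω | 𝒳 ω.1 = 𝒳 o}))
                = {((o, some x) : Ω₀ × Option K)} := by
              ext ⟨a, c⟩
              simp only [Set.mem_inter_iff, Set.mem_setOf_eq, Set.mem_singleton_iff,
                Prod.mk.injEq]
              constructor
              · rintro ⟨h2, ⟨h1, _⟩⟩; exact ⟨h1, h2⟩
              · rintro ⟨rfl, rfl⟩; exact ⟨rfl, rfl, rfl⟩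
            rw [hsetN, my_pr_singleton, hAE] at hind
            have hDne : P0 o / Z ≠ 0 := by positivity
            rw [div_eq_iff hDne] at hind
            exact hind
        · rw [if_neg hx]
          apply hAzero (o, some x)
          simp [hx]
  unfold pr
  exact Finset.sum_congr rfl fun a _ => by by_cases h : a ∈ G <;> simp [h, hAfun a]
end

section
/- Four Beauties (Pittard): Let W be uniform on {A, B, C, D}, K = {B, C, D}, and 𝒳 = K if W = A, 𝒳 = {W} if W ≠ A. Then for the Thirder measure P_E: P_E(S = x) = 1/3 for each x ∈ K, and P_E(W = A | S = B) = 1/2; while for the Halfer measure P_L: P_L(W = A | S = B) = 1/4. -/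
open scoped Classical
open Finset

/-- Four Beauties (Pittard). `W` is uniform on `Fin 4` (with `0 = A`,
`1 = B`, `2 = C`, `3 = D`), `K` is the set of possible partners `{1,2,3}`
(modelled inside `Fin 4`), `𝒳 = {1,2,3}` if `W = A` and `𝒳 = {W}` otherwise.
Then `P_E(S = x) = 1/3` for each partner `x`, `P_E(W = A | S = B) = 1/2`,
while `P_L(W = A | S = B) = 1/4`. -/
theorem stmt10
    (P0 : Fin 4 → ℝ) (hP0 : ∀ w, P0 w = 1/4)
    (𝒳 : Fin 4 → Finset (Fin 4))
    (h𝒳 : ∀ w, 𝒳 w = if w = 0 then ({1, 2, 3} : Finset (Fin 4)) else {w})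
    (PE : Fin 4 × Option (Fin 4) → ℝ)
    (hPE1 : ∀ (o : Fin 4) (x : Fin 4),
      PE (o, some x) = (ex P0 (fun o' => ((𝒳 o').card : ℝ)))⁻¹ * P0 o *
        (if x ∈ 𝒳 o then 1 else 0))
    (hPE2 : ∀ o, PE (o, none) = 0)
    (PL : Fin 4 × Option (Fin 4) → ℝ)
    (hPL1 : ∀ (o : Fin 4) (x : Fin 4),
      PL (o, some x) = if x ∈ 𝒳 o then ((𝒳 o).card : ℝ)⁻¹ * P0 o else 0)
    (hPL2 : ∀ o, PL (o, none) = 0) :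
    -- P_E(S = x) = 1/3 for each x ∈ {B, C, D}
    (∀ x : Fin 4, x ≠ 0 → pr PE {ω | ω.2 = some x} = 1/3) ∧
    -- P_E(W = A | S = B) = 1/2
    cpr PE {ω | ω.1 = 0} {ω | ω.2 = some 1} = 1/2 ∧
    -- P_L(W = A | S = B) = 1/4
    cpr PL {ω | ω.1 = 0} {ω | ω.2 = some 1} = 1/4 := by
  have hex : ex P0 (fun o' => ((𝒳 o').card : ℝ)) = 3/2 := by
    simp [ex, Fin.sum_univ_four, hP0, h𝒳]
    norm_num
  simp only [h𝒳] at hex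
  have key : ∀ x : Fin 4, pr PE {ω | ω.2 = some x} =
      ∑ o : Fin 4, PE (o, some x) := by
    intro x
    simp [pr, Fintype.sum_prod_type, Fintype.sum_option, hPE2]
  refine ⟨?_, ?_, ?_⟩
  · intro x hx
    rw [key]
    fin_cases x <;> simp_all [Fin.sum_univ_four, hPE1, hP0, h𝒳, hex] <;> norm_num
  · simp only [cpr, pr, Fintype.sum_prod_type, Fintype.sum_option]
    simp [Fin.sum_univ_four, hPE1, hPE2, hP0, h𝒳, hex, Set.mem_setOf_eq]
    norm_num
  · simp only [cpr, pr, Fintype.sum_prod_type, Fintype.sum_option]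
    simp [Fin.sum_univ_four, hPL1, hPL2, hP0, h𝒳, Set.mem_setOf_eq]
    norm_num
end

section
/- Presumptuous Philosopher: Let 1 ≤ N ≤ M, K = {1,…,M}, W a Bernoulli(1/2) random variable, and 𝒳 = K if W = 1, 𝒳 = {1,…,N} if W = 0. Then P_E(W = 0) = N/(M+N) and P_L(W = 0) = 1/2. -/
open scoped Classical
open Finset

lemma card_filter_lt_fin (N M : ℕ) (h : N ≤ M) :
    (Finset.univ.filter (fun i : Fin M => i.val < N)).card = N := by
  have : Finset.univ.filter (fun i : Fin M => i.val < N)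
      = (Finset.range N).attachFin (fun m hm => lt_of_lt_of_le (mem_range.mp hm) h) := by
    ext i; simp [Finset.mem_attachFin]
  rw [this, Finset.card_attachFin, Finset.card_range]

/-- Presumptuous Philosopher. `K = Fin M`, `W ~ Ber(1/2)`, `𝒳 = K` if `W = 1`
and `𝒳 = {1,…,N}` if `W = 0`, with `1 ≤ N ≤ M`. Then
`P_E(W = 0) = N/(M+N)` while `P_L(W = 0) = 1/2`. -/
theorem stmt11 (N M : ℕ) (hN : 1 ≤ N) (hNM : N ≤ M)
    (P0 : Bool → ℝ) (hP0 : ∀ w, P0 w = 1/2)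
    (𝒳 : Bool → Finset (Fin M))
    (h𝒳1 : 𝒳 true = Finset.univ)
    (h𝒳0 : 𝒳 false = Finset.univ.filter (fun i : Fin M => i.val < N))
    (PE : Bool × Option (Fin M) → ℝ)
    (hPE1 : ∀ (o : Bool) (x : Fin M),
      PE (o, some x) = (ex P0 (fun o' => ((𝒳 o').card : ℝ)))⁻¹ * P0 o *
        (if x ∈ 𝒳 o then 1 else 0))
    (hPE2 : ∀ o, PE (o, none) = 0) :
    -- P_E(W = 0) = N/(M+N)
    pr PE {ω | ω.1 = false} = (N : ℝ) / (M + N) ∧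
    -- P_L(W = 0) = P(W = 0 | 𝒳 ≠ ∅) = 1/2
    cpr P0 {w | w = false} {w | 𝒳 w ≠ ∅} = 1/2 := by

  have hM : 1 ≤ M := hN.trans hNM
  have hc0 : (𝒳 false).card = N := by rw [h𝒳0]; exact card_filter_lt_fin N M hNM
  have hc1 : (𝒳 true).card = M := by rw [h𝒳1]; simp
  have hex : ex P0 (fun o' => ((𝒳 o').card : ℝ)) = (M + N) / 2 := by
    simp only [ex, Fintype.sum_bool, hc0, hc1, hP0]
    ring
  have hMN : (0:ℝ) < (M:ℝ) + N := by positivity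
  constructor
  · rw [pr, Fintype.sum_prod_type, Fintype.sum_bool]
    simp only [Set.mem_setOf_eq, if_neg (by simp : ¬(true = false)), if_pos rfl,
      Finset.sum_const_zero, zero_add]
    rw [Fintype.sum_option, hPE2]
    simp only [hPE1, hex, hP0, if_true]
    rw [← Finset.mul_sum, Finset.sum_boole]
    simp only [Finset.filter_mem_eq_inter, Finset.univ_inter, hc0]
    field_simp
    ring
  · have hne0 : 𝒳 false ≠ ∅ := by
      intro h; rw [h] at hc0; simp at hc0; omega
    have hne1 : 𝒳 true ≠ ∅ := by
      intro h; rw [h] at hc1; simp at hc1; omega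
    simp [cpr, pr, Fintype.sum_bool, hne0, hne1, hP0]
    norm_num
end

section
/- Technicolour Beauty under P_L: With Z and L_y as above, for every objective event F, P_L(F ∩ {Z_S = y}) = E[1_F L_y / X | X ≥ 1], where X = |𝒳|, and hence P_L(F | Z_S = y) = E[1_F L_y X^{-1} | X ≥ 1] / E[L_y X^{-1} | X ≥ 1] whenever the denominator is positive. -/
open scoped Classical
open Finset

/-- Technicolour Beauty under the Halfer measure `P_L`: with `X = |𝒳|`,
`P_L(F ∩ {Z_S = y}) = E[1_F L_y / X | X ≥ 1]` for every objective `F`, and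
hence `P_L(F | Z_S = y) = E[1_F L_y X⁻¹ | X ≥ 1] / E[L_y X⁻¹ | X ≥ 1]`
whenever the denominator is positive. -/
theorem stmt13 {Ω₀ K 𝒵 : Type*} [Fintype Ω₀] [Fintype K] [DecidableEq K] [Fintype 𝒵]
    (P0 : Ω₀ → ℝ) (𝒳 : Ω₀ → Finset K)
    (hP0 : IsProb P0)
    (hpos : 0 < pr P0 {o | 𝒳 o ≠ ∅})
    (Z : Ω₀ → K → 𝒵)
    (L : 𝒵 → Ω₀ → ℕ)
    (hL : ∀ (y : 𝒵) (o : Ω₀), L y o = ((𝒳 o).filter (fun x => Z o x = y)).card)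
    (PL : Ω₀ × Option K → ℝ)
    (hPL1 : ∀ (o : Ω₀) (x : K),
      PL (o, some x) =
        if x ∈ 𝒳 o then ((𝒳 o).card : ℝ)⁻¹ * P0 o / pr P0 {o' | 𝒳 o' ≠ ∅} else 0)
    (hPL2 : ∀ o : Ω₀, PL (o, none) = 0) :
    ∀ (F : Set Ω₀) (y : 𝒵),
      pr PL ({ω | ω.1 ∈ F} ∩ {ω | ∃ x : K, ω.2 = some x ∧ x ∈ 𝒳 ω.1 ∧ Z ω.1 x = y})
        = ex P0 (fun o => if 𝒳 o ≠ ∅ ∧ o ∈ F then (L y o : ℝ) / ((𝒳 o).card : ℝ) else 0)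
            / pr P0 {o | 𝒳 o ≠ ∅} ∧
      (0 < ex P0 (fun o => if 𝒳 o ≠ ∅ then (L y o : ℝ) / ((𝒳 o).card : ℝ) else 0)
            / pr P0 {o | 𝒳 o ≠ ∅} →
        cpr PL {ω | ω.1 ∈ F} {ω | ∃ x : K, ω.2 = some x ∧ x ∈ 𝒳 ω.1 ∧ Z ω.1 x = y}
          = (ex P0 (fun o => if 𝒳 o ≠ ∅ ∧ o ∈ F then (L y o : ℝ) / ((𝒳 o).card : ℝ) else 0)
                / pr P0 {o | 𝒳 o ≠ ∅})
            / (ex P0 (fun o => if 𝒳 o ≠ ∅ then (L y o : ℝ) / ((𝒳 o).card : ℝ) else 0)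
                / pr P0 {o | 𝒳 o ≠ ∅})) := by
  intro F y
  have key : ∀ (G : Set Ω₀),
      pr PL ({ω | ω.1 ∈ G} ∩ {ω | ∃ x : K, ω.2 = some x ∧ x ∈ 𝒳 ω.1 ∧ Z ω.1 x = y})
        = ex P0 (fun o => if 𝒳 o ≠ ∅ ∧ o ∈ G then (L y o : ℝ) / ((𝒳 o).card : ℝ) else 0)
            / pr P0 {o | 𝒳 o ≠ ∅} := by
    intro G
    set c := pr P0 {o | 𝒳 o ≠ ∅} with hc
    unfold pr ex
    rw [Finset.sum_div, Fintype.sum_prod_type]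
    refine Finset.sum_congr rfl fun o _ => ?_
    rw [Fintype.sum_option, hPL2, ite_self, zero_add]
    refine Eq.trans (b := ∑ x : K, if o ∈ G ∧ x ∈ 𝒳 o ∧ Z o x = y then
            ((𝒳 o).card : ℝ)⁻¹ * P0 o / c else 0) ?_ ?_
    · refine Finset.sum_congr rfl fun x _ => ?_
      by_cases h : o ∈ G ∧ x ∈ 𝒳 o ∧ Z o x = y
      · rw [if_pos h, if_pos, hPL1, if_pos h.2.1, hc]
        exact ⟨h.1, x, rfl, h.2⟩
      · rw [if_neg h, if_neg]
        rintro ⟨hG, x', hx', hmem, hz⟩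
        obtain rfl : x = x' := by simpa using hx'
        exact h ⟨hG, hmem, hz⟩
    by_cases hG : o ∈ G
    · simp only [hG, true_and, and_true]
      rw [← Finset.sum_filter, Finset.sum_const, nsmul_eq_mul]
      have hfil : (Finset.univ.filter (fun x => x ∈ 𝒳 o ∧ Z o x = y))
          = (𝒳 o).filter (fun x => Z o x = y) := by
        ext x; simp
      rw [hfil, ← hL]
      by_cases he : 𝒳 o = ∅
      · have hL0 : L y o = 0 := by rw [hL, he]; simp
        simp [he, hL0]
      · rw [if_pos he]
        have hcard : ((𝒳 o).card : ℝ) ≠ 0 := by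
          simpa using Finset.card_ne_zero.mpr (Finset.nonempty_iff_ne_empty.mpr he)
        field_simp
    · simp [hG]
  refine ⟨key F, fun hd => ?_⟩
  have hB : pr PL {ω | ∃ x : K, ω.2 = some x ∧ x ∈ 𝒳 ω.1 ∧ Z ω.1 x = y}
      = ex P0 (fun o => if 𝒳 o ≠ ∅ then (L y o : ℝ) / ((𝒳 o).card : ℝ) else 0)
          / pr P0 {o | 𝒳 o ≠ ∅} := by
    have := key Set.univ
    simpa [Set.univ_inter] using this
  rw [cpr, key F, hB]
end

section
/- If Z is injective, i.e. P(L_y ≤ 1) = 1 for each y ∈ 𝒵, then for every objective event F and every y with P_E(Z_S = y) > 0, P_E(F | Z_S = y) = P(F | G_y), where G_y = {L_y ≥ 1} is the objective event that some observer sees colour y. -/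
open scoped Classical
open Finset

/-- If the auxiliary process `Z` is injective (`P(L_y ≤ 1) = 1` for each `y`)
then conditioning `P_E` on the observer's observation `{Z_S = y}` agrees with
objectively conditioning on `G_y = {L_y ≥ 1}`:
`P_E(F | Z_S = y) = P(F | G_y)` for all objective `F`. -/
theorem stmt14 {Ω₀ K 𝒵 : Type*} [Fintype Ω₀] [Fintype K] [DecidableEq K] [Fintype 𝒵]
    (P0 : Ω₀ → ℝ) (𝒳 : Ω₀ → Finset K)
    (hP0 : IsProb P0)
    (hne : pr P0 {o | 𝒳 o = ∅} < 1)
    (Z : Ω₀ → K → 𝒵)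
    (L : 𝒵 → Ω₀ → ℕ)
    (hL : ∀ (y : 𝒵) (o : Ω₀), L y o = ((𝒳 o).filter (fun x => Z o x = y)).card)
    (hinj : ∀ y : 𝒵, pr P0 {o | L y o ≤ 1} = 1)
    (PE : Ω₀ × Option K → ℝ)
    (hPE1 : ∀ (o : Ω₀) (x : K),
      PE (o, some x) = (ex P0 (fun o' => ((𝒳 o').card : ℝ)))⁻¹ * P0 o *
        (if x ∈ 𝒳 o then 1 else 0))
    (hPE2 : ∀ o : Ω₀, PE (o, none) = 0) :
    ∀ (F : Set Ω₀) (y : 𝒵),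
      0 < pr PE {ω | ∃ x : K, ω.2 = some x ∧ x ∈ 𝒳 ω.1 ∧ Z ω.1 x = y} →
      cpr PE {ω | ω.1 ∈ F} {ω | ∃ x : K, ω.2 = some x ∧ x ∈ 𝒳 ω.1 ∧ Z ω.1 x = y}
        = cpr P0 F {o | 1 ≤ L y o} := by

  intro F y hpos
  set c := (ex P0 (fun o' => ((𝒳 o').card : ℝ)))⁻¹ with hc
  -- pointwise consequence of injectivity
  have hkey : ∀ o : Ω₀, 0 < P0 o → L y o ≤ 1 := by
    intro o hpo
    by_contra h
    have h1 := hinj y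
    unfold pr at h1
    have hlt : (∑ a : Ω₀, if a ∈ {o | L y o ≤ 1} then P0 a else 0) < ∑ a : Ω₀, P0 a := by
      refine Finset.sum_lt_sum (fun i _ => ?_) ⟨o, Finset.mem_univ o, ?_⟩
      · split
        · exact le_refl _
        · exact hP0.1 i
      · simp only [Set.mem_setOf_eq, h, if_neg]
        simpa [h] using hpo
    rw [hP0.2] at hlt
    simp only [Set.mem_setOf_eq] at h1 hlt
    exact absurd h1 (ne_of_lt (by convert hlt using 2 with a ha))
  have hterm : ∀ o : Ω₀, P0 o * (L y o : ℝ) = if 1 ≤ L y o then P0 o else 0 := by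
    intro o
    rcases eq_or_lt_of_le (hP0.1 o) with h0 | h0
    · simp [← h0]
    · rcases Nat.le_one_iff_eq_zero_or_eq_one.1 (hkey o h0) with h | h <;> simp [h]
  have hmain : ∀ (G : Set Ω₀),
      pr PE ({ω : Ω₀ × Option K | ω.1 ∈ G} ∩
          {ω | ∃ x : K, ω.2 = some x ∧ x ∈ 𝒳 ω.1 ∧ Z ω.1 x = y})
        = c * pr P0 (G ∩ {o | 1 ≤ L y o}) := by
    intro G
    unfold pr
    rw [Fintype.sum_prod_type, Finset.mul_sum]
    refine Finset.sum_congr rfl fun o _ => ?_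
    rw [Fintype.sum_option]
    simp only [Set.mem_inter_iff, Set.mem_setOf_eq, hPE2, hPE1, Option.some.injEq,
      reduceCtorEq, false_and, exists_false, and_false, if_false, zero_add,
      exists_eq_left']
    have step : ∀ x : K,
        (if o ∈ G ∧ x ∈ 𝒳 o ∧ Z o x = y then
          c * P0 o * (if x ∈ 𝒳 o then 1 else 0) else 0)
        = (if o ∈ G ∧ x ∈ 𝒳 o ∧ Z o x = y then c * P0 o else 0) := by
      intro x
      split
      · next hcond => rw [if_pos hcond.2.1, mul_one]
      · rfl
    rw [Finset.sum_congr rfl (fun x _ => step x)]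
    by_cases hG : o ∈ G
    · simp only [hG, true_and]
      have : (∑ x : K, if x ∈ 𝒳 o ∧ Z o x = y then c * P0 o else 0)
          = ((Finset.univ.filter (fun x => x ∈ 𝒳 o ∧ Z o x = y)).card : ℝ) * (c * P0 o) := by
        rw [← Finset.sum_filter, Finset.sum_const, nsmul_eq_mul]
      rw [this]
      have hcard : (Finset.univ.filter (fun x => x ∈ 𝒳 o ∧ Z o x = y)) =
          ((𝒳 o).filter (fun x => Z o x = y)) := by
        ext x; simp [and_comm]
      rw [hcard, ← hL y o]
      rw [show ((L y o : ℝ)) * (c * P0 o) = c * (P0 o * (L y o : ℝ)) by ring, hterm o]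
    · simp [hG]
  have hB : {ω : Ω₀ × Option K | ∃ x : K, ω.2 = some x ∧ x ∈ 𝒳 ω.1 ∧ Z ω.1 x = y}
      = {ω : Ω₀ × Option K | ω.1 ∈ (Set.univ : Set Ω₀)} ∩
        {ω | ∃ x : K, ω.2 = some x ∧ x ∈ 𝒳 ω.1 ∧ Z ω.1 x = y} := by
    simp
  have hden : pr PE {ω : Ω₀ × Option K | ∃ x : K, ω.2 = some x ∧ x ∈ 𝒳 ω.1 ∧ Z ω.1 x = y}
      = c * pr P0 {o | 1 ≤ L y o} := by
    rw [hB, hmain Set.univ, Set.univ_inter]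
  unfold cpr
  rw [hmain F, hden]
  have hpos' : 0 < c * pr P0 {o | 1 ≤ L y o} := hden ▸ hpos
  have hc0 : c ≠ 0 := by
    intro h; rw [h, zero_mul] at hpos'; exact lt_irrefl 0 hpos'
  exact mul_div_mul_left _ _ hc0
end

section
/- Hartle–Srednicki model correct computation: Let U be uniform on {AR, SR}; if U = AR all N cycles are red, if U = SR exactly M of N cycles are red (uniformly among arrangements); each cycle independently contains observers with probability p. With Z_S the colour seen by a randomly located observer, the Thirder measure satisfies P_E(U = SR | Z_S = R) = M/(M+N). -/
open scoped Classical
open Finset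

lemma sum_fun_bool {N : ℕ} (g : Fin N → Bool → ℝ) :
    ∑ ξ : Fin N → Bool, ∏ i, g i (ξ i) = ∏ i, (g i true + g i false) := by
  rw [← Fintype.piFinset_univ, ← Finset.prod_univ_sum]
  simp

lemma bern_total {N : ℕ} (p : ℝ) :
    ∑ ξ : Fin N → Bool, ∏ i, (if ξ i then p else 1 - p) = 1 := by
  rw [sum_fun_bool (fun _ b => if b then p else 1 - p)]
  simp

lemma bern_single {N : ℕ} (p : ℝ) (i : Fin N) :
    ∑ ξ : Fin N → Bool, ∏ j, (if j = i then (if ξ j then p else 0)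
      else (if ξ j then p else 1 - p)) = p := by
  rw [sum_fun_bool (fun j b => if j = i then (if b then p else 0)
      else (if b then p else 1 - p))]
  have : ∀ j, ((if j = i then if (true:Bool) = true then p else 0 else if (true:Bool) = true then p else 1 - p) +
        if j = i then if (false:Bool) = true then p else 0 else if (false:Bool) = true then p else 1 - p)
      = if j = i then p else 1 := by
    intro j; by_cases h : j = i <;> simp [h]
  rw [Finset.prod_congr rfl fun j _ => this j]
  simp

lemma bern_count {N : ℕ} (p : ℝ) (S : Finset (Fin N)) :
    ∑ ξ : Fin N → Bool, (∏ i, (if ξ i then p else 1 - p)) *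
      ((S.filter (fun i => ξ i = true)).card : ℝ) = p * S.card := by
  have h1 : ∀ ξ : Fin N → Bool, ((S.filter (fun i => ξ i = true)).card : ℝ)
      = ∑ i ∈ S, (if ξ i then (1:ℝ) else 0) := by
    intro ξ
    rw [Finset.card_filter]
    push_cast
    simp
  simp_rw [h1, Finset.mul_sum]
  rw [Finset.sum_comm]
  have h2 : ∀ i ∈ S, ∑ ξ : Fin N → Bool,
      (∏ j, (if ξ j then p else 1 - p)) * (if ξ i then (1:ℝ) else 0) = p := by
    intro i _
    have h3 : ∀ ξ : Fin N → Bool,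
        (∏ j, (if ξ j then p else 1 - p)) * (if ξ i then (1:ℝ) else 0)
        = ∏ j, (if j = i then (if ξ j then p else 0)
            else (if ξ j then p else 1 - p)) := by
      intro ξ
      rw [← Finset.mul_prod_erase univ (fun j => if j = i then (if ξ j then p else 0)
            else (if ξ j then p else 1 - p)) (mem_univ i),
          ← Finset.mul_prod_erase univ (fun j => if ξ j then p else 1 - p) (mem_univ i)]
      have he : ∏ j ∈ univ.erase i, (if j = i then (if ξ j then p else 0)
            else (if ξ j then p else 1 - p))
          = ∏ j ∈ univ.erase i, (if ξ j then p else 1 - p) :=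
        Finset.prod_congr rfl (fun j hj => by simp [Finset.ne_of_mem_erase hj])
      rw [he]
      by_cases h : ξ i <;> simp [h]
    simp_rw [h3]
    exact bern_single p i
  rw [Finset.sum_congr rfl h2, Finset.sum_const, nsmul_eq_mul, mul_comm]

lemma sum_if_card {N Mr : ℕ} (c : ℝ) :
    ∑ A : Finset (Fin N), (if A.card = Mr then c else 0) = (N.choose Mr : ℝ) * c := by
  rw [Finset.sum_ite, Finset.sum_const, Finset.sum_const_zero, add_zero, nsmul_eq_mul]
  congr 1
  rw [← Finset.powerset_univ, ← Finset.powersetCard_eq_filter,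
    Finset.card_powersetCard, Finset.card_univ, Fintype.card_fin]

lemma hs_true {N : ℕ} (p : ℝ) (T : Finset (Fin N) → Finset (Fin N)) :
    ∑ A : Finset (Fin N),
      (if A = Finset.univ then (1:ℝ) else 0) *
        (∑ ξ : Fin N → Bool, (∏ i, (if ξ i then p else 1 - p)) *
          (((T A).filter (fun i => ξ i = true)).card : ℝ))
    = p * ((T Finset.univ).card : ℝ) := by
  simp_rw [ite_mul, zero_mul, one_mul]
  rw [Finset.sum_ite_eq' Finset.univ Finset.univ
    (fun A => ∑ ξ : Fin N → Bool, (∏ i, (if ξ i then p else 1 - p)) *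
      (((T A).filter (fun i => ξ i = true)).card : ℝ))]
  simp [bern_count]

lemma hs_false {N Mr : ℕ} (p : ℝ) (T : Finset (Fin N) → Finset (Fin N)) (t : ℕ)
    (hT : ∀ A : Finset (Fin N), A.card = Mr → ((T A).card : ℝ) = t) :
    ∑ A : Finset (Fin N),
      (if A.card = Mr then ((N.choose Mr : ℝ))⁻¹ else 0) *
        (∑ ξ : Fin N → Bool, (∏ i, (if ξ i then p else 1 - p)) *
          (((T A).filter (fun i => ξ i = true)).card : ℝ))
    = (N.choose Mr : ℝ) * ((N.choose Mr : ℝ))⁻¹ * (p * t) := by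
  have h : ∀ A : Finset (Fin N),
      (if A.card = Mr then ((N.choose Mr : ℝ))⁻¹ else 0) *
        (∑ ξ : Fin N → Bool, (∏ i, (if ξ i then p else 1 - p)) *
          (((T A).filter (fun i => ξ i = true)).card : ℝ))
      = (if A.card = Mr then ((N.choose Mr : ℝ))⁻¹ * (p * t) else 0) := by
    intro A
    rw [bern_count]
    by_cases h : A.card = Mr
    · simp [h, hT A h]
    · simp [h]
  simp_rw [h]
  rw [sum_if_card, mul_assoc]

lemma ite_prop_congr {P Q : Prop} {dP : Decidable P} {dQ : Decidable Q} {a b : ℝ}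
    (h : P ↔ Q) : (@ite ℝ P dP a b) = (@ite ℝ Q dQ a b) := by
  by_cases hp : P
  · rw [if_pos hp, if_pos (h.mp hp)]
  · rw [if_neg hp, if_neg (fun q => hp (h.mpr q))]

/-- Hartle–Srednicki model, correct computation. The objective space is
`Bool × Finset (Fin N) × (Fin N → Bool)`: the theory `U` (`true = AR`,
`false = SR`), the set `A` of red cycles (all of `Fin N` under AR; a uniformly
chosen `M`-subset under SR), and the occupation variables `ξ` (i.i.d.
Bernoulli `p`). For the Thirder measure, `P_E(U = SR | Z_S = R) = M/(M+N)`. -/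
theorem stmt17 (N Mr : ℕ) (hM1 : 1 ≤ Mr) (hMN : Mr + 1 ≤ N)
    (p : ℝ) (hp0 : 0 < p) (hp1 : p < 1)
    (P0 : Bool × Finset (Fin N) × (Fin N → Bool) → ℝ)
    (hP0 : ∀ (u : Bool) (A : Finset (Fin N)) (ξ : Fin N → Bool),
      P0 (u, A, ξ) =
        (1/2) *
        (if u then (if A = Finset.univ then 1 else 0)
         else (if A.card = Mr then ((N.choose Mr : ℝ))⁻¹ else 0)) *
        ∏ i, (if ξ i then p else 1 - p))
    (𝒳 : Bool × Finset (Fin N) × (Fin N → Bool) → Finset (Fin N))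
    (h𝒳 : ∀ o, 𝒳 o = Finset.univ.filter (fun i : Fin N => o.2.2 i = true))
    (PE : (Bool × Finset (Fin N) × (Fin N → Bool)) × Option (Fin N) → ℝ)
    (hPE1 : ∀ (o : Bool × Finset (Fin N) × (Fin N → Bool)) (x : Fin N),
      PE (o, some x) = (ex P0 (fun o' => ((𝒳 o').card : ℝ)))⁻¹ * P0 o *
        (if x ∈ 𝒳 o then 1 else 0))
    (hPE2 : ∀ o, PE (o, none) = 0) :
    -- conditionally on seeing red, the Thirder credence in SR is M/(M+N)
    cpr PE {ω | ω.1.1 = false}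
      {ω | ∃ i : Fin N, ω.2 = some i ∧ i ∈ 𝒳 ω.1 ∧ i ∈ ω.1.2.1}
      = (Mr : ℝ) / (Mr + N) := by
  classical
  -- abbreviation for the count of occupied cycles within T A
  have key_true : ∀ T : Finset (Fin N) → Finset (Fin N),
      ∑ A : Finset (Fin N), ∑ ξ : Fin N → Bool,
        P0 (true, A, ξ) * (((T A).filter (fun i => ξ i = true)).card : ℝ)
      = (1/2) * (p * ((T Finset.univ).card : ℝ)) := by
    intro T
    have h : ∀ (A : Finset (Fin N)) (ξ : Fin N → Bool),
        P0 (true, A, ξ) * (((T A).filter (fun i => ξ i = true)).card : ℝ)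
        = (1/2) * ((if A = Finset.univ then (1:ℝ) else 0) *
            ((∏ i, (if ξ i then p else 1 - p)) *
              (((T A).filter (fun i => ξ i = true)).card : ℝ))) := by
      intro A ξ
      rw [hP0]
      simp only [if_true]
      ring
    simp_rw [h, ← Finset.mul_sum]
    rw [hs_true]
  have hch : (N.choose Mr : ℝ) ≠ 0 := by
    have : 0 < N.choose Mr := Nat.choose_pos (by omega)
    positivity
  have key_false : ∀ (T : Finset (Fin N) → Finset (Fin N)) (t : ℕ),
      (∀ A : Finset (Fin N), A.card = Mr → ((T A).card : ℝ) = t) →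
      ∑ A : Finset (Fin N), ∑ ξ : Fin N → Bool,
        P0 (false, A, ξ) * (((T A).filter (fun i => ξ i = true)).card : ℝ)
      = (1/2) * (p * (t : ℝ)) := by
    intro T t hT
    have h : ∀ (A : Finset (Fin N)) (ξ : Fin N → Bool),
        P0 (false, A, ξ) * (((T A).filter (fun i => ξ i = true)).card : ℝ)
        = (1/2) * ((if A.card = Mr then ((N.choose Mr : ℝ))⁻¹ else 0) *
            ((∏ i, (if ξ i then p else 1 - p)) *
              (((T A).filter (fun i => ξ i = true)).card : ℝ))) := by
      intro A ξ
      rw [hP0]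
      simp only [if_false, Bool.false_eq_true]
      ring
    simp_rw [h, ← Finset.mul_sum]
    rw [hs_false p T t hT, mul_inv_cancel₀ hch, one_mul]
  -- value of the normalizing constant
  have hCval : ex P0 (fun o' => ((𝒳 o').card : ℝ)) = p * N := by
    unfold ex
    rw [Fintype.sum_prod_type]
    have h : ∀ (u : Bool) (o' : Finset (Fin N) × (Fin N → Bool)),
        P0 (u, o') * ((𝒳 (u, o')).card : ℝ)
        = P0 (u, o'.1, o'.2) *
          (((Finset.univ.filter (fun i : Fin N => o'.2 i = true)).card : ℝ)) := by
      intro u o'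
      rw [h𝒳]
    simp_rw [h]
    rw [Fintype.sum_bool]
    simp_rw [Fintype.sum_prod_type]
    have ht := key_true (fun _ => Finset.univ)
    have hf := key_false (fun _ => Finset.univ) N (fun A _ => by
      simp [Finset.card_univ])
    rw [ht, hf]
    simp [Finset.card_univ]
    ring
  -- the per-outcome collapsed sum over the observer coordinate
  have hterm : ∀ (G : Bool × Finset (Fin N) × (Fin N → Bool) → Prop)
      (o : Bool × Finset (Fin N) × (Fin N → Bool)),
      (∑ y : Option (Fin N),
        (if (G o ∧ ∃ i : Fin N, y = some i ∧ i ∈ 𝒳 o ∧ i ∈ o.2.1) then PE (o, y) else 0))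
      = (if G o then (1:ℝ) else 0) * ((ex P0 (fun o' => ((𝒳 o').card : ℝ)))⁻¹ * P0 o *
          ((o.2.1.filter (fun i => o.2.2 i = true)).card : ℝ)) := by
    intro G o
    rw [Fintype.sum_option]
    have hnone : (if (G o ∧ ∃ i : Fin N, (none : Option (Fin N)) = some i ∧ i ∈ 𝒳 o ∧ i ∈ o.2.1)
        then PE (o, none) else 0) = 0 := by
      rw [hPE2]
      simp
    rw [hnone, zero_add]
    have hsome : ∀ x : Fin N,
        (if (G o ∧ ∃ i : Fin N, (some x : Option (Fin N)) = some i ∧ i ∈ 𝒳 o ∧ i ∈ o.2.1)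
          then PE (o, some x) else 0)
        = (if G o then (1:ℝ) else 0) * ((ex P0 (fun o' => ((𝒳 o').card : ℝ)))⁻¹ * P0 o *
            (if x ∈ o.2.1 ∧ o.2.2 x = true then (1:ℝ) else 0)) := by
      intro x
      rw [hPE1]
      have hx : x ∈ 𝒳 o ↔ o.2.2 x = true := by
        rw [h𝒳]; simp
      by_cases hG : G o
      · by_cases h1 : x ∈ o.2.1
        · by_cases h2 : o.2.2 x = true
          · simp [hG, h1, h2, hx]
          · simp [hG, h1, h2, hx]
        · by_cases h2 : o.2.2 x = true
          · simp [hG, h1, h2, hx]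
          · simp [hG, h1, h2, hx]
      · simp [hG]
    rw [Finset.sum_congr rfl (fun x _ => hsome x), ← Finset.mul_sum, ← Finset.mul_sum]
    congr 1
    congr 1
    rw [← Finset.sum_filter, Finset.sum_const, nsmul_eq_mul, mul_one]
    congr 2
    ext x
    simp [and_comm]
  -- clean versions of hterm
  have htermT : ∀ o : Bool × Finset (Fin N) × (Fin N → Bool),
      (∑ y : Option (Fin N),
        (if ((o, y) ∈ {ω : (Bool × Finset (Fin N) × (Fin N → Bool)) × Option (Fin N) |
          ∃ i : Fin N, ω.2 = some i ∧ i ∈ 𝒳 ω.1 ∧ i ∈ ω.1.2.1}) then PE (o, y) else 0))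
      = (ex P0 (fun o' => ((𝒳 o').card : ℝ)))⁻¹ * P0 o *
          ((o.2.1.filter (fun i => o.2.2 i = true)).card : ℝ) := by
    intro o
    refine Eq.trans (Finset.sum_congr rfl fun y _ => ite_prop_congr ?_)
      (Eq.trans (hterm (fun _ => True) o) ?_)
    · simp [Set.mem_setOf_eq]
    · simp
  have htermF : ∀ o : Bool × Finset (Fin N) × (Fin N → Bool),
      (∑ y : Option (Fin N),
        (if ((o, y) ∈ ({ω : (Bool × Finset (Fin N) × (Fin N → Bool)) × Option (Fin N) |
            ω.1.1 = false} ∩ {ω | ∃ i : Fin N, ω.2 = some i ∧ i ∈ 𝒳 ω.1 ∧ i ∈ ω.1.2.1}))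
          then PE (o, y) else 0))
      = (if o.1 = false then (1:ℝ) else 0) *
          ((ex P0 (fun o' => ((𝒳 o').card : ℝ)))⁻¹ * P0 o *
          ((o.2.1.filter (fun i => o.2.2 i = true)).card : ℝ)) := by
    intro o
    refine Eq.trans (Finset.sum_congr rfl fun y _ => ite_prop_congr ?_)
      (Eq.trans (hterm (fun o => o.1 = false) o) ?_)
    · simp [Set.mem_setOf_eq, Set.mem_inter_iff]
    · congr 1
      exact ite_prop_congr Iff.rfl
  -- denominator
  have hden : pr PE {ω : (Bool × Finset (Fin N) × (Fin N → Bool)) × Option (Fin N) |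
        ∃ i : Fin N, ω.2 = some i ∧ i ∈ 𝒳 ω.1 ∧ i ∈ ω.1.2.1}
      = (ex P0 (fun o' => ((𝒳 o').card : ℝ)))⁻¹ * ((1/2) * (p * N) + (1/2) * (p * Mr)) := by
    unfold pr
    rw [Fintype.sum_prod_type]
    refine Eq.trans (Finset.sum_congr rfl fun o _ =>
      Eq.trans (Finset.sum_congr rfl fun y _ => ite_prop_congr Iff.rfl) (htermT o)) ?_
    simp_rw [mul_assoc, ← Finset.mul_sum]
    congr 1
    rw [Fintype.sum_prod_type, Fintype.sum_bool]
    simp_rw [Fintype.sum_prod_type]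
    have ht := key_true (fun A => A)
    have hf := key_false (fun A => A) Mr (fun A hA => by exact_mod_cast congrArg Nat.cast hA)
    rw [ht, hf]
    simp [Finset.card_univ]
  -- numerator
  have hnum : pr PE ({ω : (Bool × Finset (Fin N) × (Fin N → Bool)) × Option (Fin N) |
        ω.1.1 = false} ∩ {ω | ∃ i : Fin N, ω.2 = some i ∧ i ∈ 𝒳 ω.1 ∧ i ∈ ω.1.2.1})
      = (ex P0 (fun o' => ((𝒳 o').card : ℝ)))⁻¹ * ((1/2) * (p * Mr)) := by
    unfold pr
    rw [Fintype.sum_prod_type]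
    refine Eq.trans (Finset.sum_congr rfl fun o _ =>
      Eq.trans (Finset.sum_congr rfl fun y _ => ite_prop_congr Iff.rfl) (htermF o)) ?_
    rw [Fintype.sum_prod_type, Fintype.sum_bool]
    have hzero : ∀ x : Finset (Fin N) × (Fin N → Bool),
        (if ((true : Bool), x).1 = false then (1:ℝ) else 0) *
          ((ex P0 (fun o' => ((𝒳 o').card : ℝ)))⁻¹ * P0 ((true : Bool), x) *
            ((((true : Bool), x).2.1.filter (fun i => ((true : Bool), x).2.2 i = true)).card : ℝ)) = 0 := by
      intro x
      rw [if_neg (by simp)]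
      ring
    have hone : ∀ x : Finset (Fin N) × (Fin N → Bool),
        (if ((false : Bool), x).1 = false then (1:ℝ) else 0) *
          ((ex P0 (fun o' => ((𝒳 o').card : ℝ)))⁻¹ * P0 ((false : Bool), x) *
            ((((false : Bool), x).2.1.filter (fun i => ((false : Bool), x).2.2 i = true)).card : ℝ))
        = (ex P0 (fun o' => ((𝒳 o').card : ℝ)))⁻¹ *
            (P0 ((false : Bool), x) *
              ((x.1.filter (fun i => x.2 i = true)).card : ℝ)) := by
      intro x
      rw [if_pos rfl]
      ring
    refine Eq.trans (congrArg₂ (· + ·)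
      (Eq.trans (Finset.sum_congr rfl fun x _ => hzero x) Finset.sum_const_zero)
      (Finset.sum_congr rfl fun x _ => hone x)) ?_
    beta_reduce
    rw [zero_add, ← Finset.mul_sum]
    congr 1
    rw [Fintype.sum_prod_type]
    have hf := key_false (fun A => A) Mr (fun A hA => by exact_mod_cast congrArg Nat.cast hA)
    exact hf
  -- final arithmetic
  unfold cpr
  rw [hnum, hden, hCval]
  have hN0 : (0:ℝ) < N := by
    have : 0 < N := by omega
    exact_mod_cast this
  have hM0 : (0:ℝ) < Mr := by
    have : 0 < Mr := by omega
    exact_mod_cast this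
  have hpN : (p * N) ≠ 0 := by positivity
  have hMN0 : (Mr : ℝ) + N ≠ 0 := by positivity
  field_simp
  ring
end
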